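/- arXiv:1708.00357 — 6 statements merged into one kernel-verified Lean document; each statement's English description precedes it below -/
import Mathlib

section
/- Let X be a bornological V-module with family of bounded subsets 𝓑. Then: (i) a sequence in X converges if and only if it is contained in some bounded V-submodule Y ⊆ X and converges in Y with respect to the π-adic topology; (ii) X is separated if and only if every bounded V-submodule of X is π-adically separated, if and only if the bounded π-adically separated V-submodules are cofinal in 𝓑 with respect to inclusion; (iii) X is complete if and only if the bounded π-adically complete V-submodules are cofinal in 𝓑. -/
open Pointwise

universe u v w

/-- A (convex) bornology on a `V`-module `X`: a family of *bounded* subsets containing all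
finite subsets, closed under subsets and finite unions, and such that the `V`-submodule
generated by a bounded subset is again bounded. -/
structure ModBornology (V : Type u) [CommRing V] (X : Type v) [AddCommGroup X] [Module V X] :
    Type v where
  IsBounded : Set X → Prop
  isBounded_of_finite : ∀ ⦃s : Set X⦄, s.Finite → IsBounded s
  isBounded_subset : ∀ ⦃s t : Set X⦄, IsBounded t → s ⊆ t → IsBounded s
  isBounded_union : ∀ ⦃s t : Set X⦄, IsBounded s → IsBounded t → IsBounded (s ∪ t)
  isBounded_span : ∀ ⦃s : Set X⦄, IsBounded s → IsBounded (Submodule.span V s : Set X)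

namespace Born

variable {V : Type u} [CommRing V] {X : Type v} [AddCommGroup X] [Module V X]
  {Y : Type w} [AddCommGroup Y] [Module V Y]

/-- `δ n → 0` in the `π`-adic topology on `V`. -/
def TendstoPiAdic (π : V) (δ : ℕ → V) : Prop :=
  ∀ m : ℕ, ∃ N : ℕ, ∀ n ≥ N, π ^ m ∣ δ n

/-- The sequence `x` `S`-converges to `l`. -/
def SConvTo (π : V) (S : Set X) (x : ℕ → X) (l : X) : Prop :=
  ∃ δ : ℕ → V, TendstoPiAdic π δ ∧ ∀ n : ℕ, x n - l ∈ δ n • S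

/-- The sequence `x` converges (bornologically) to `l`. -/
def ConvTo (π : V) (𝓑 : ModBornology V X) (x : ℕ → X) (l : X) : Prop :=
  ∃ S : Set X, 𝓑.IsBounded S ∧ SConvTo π S x l

/-- The sequence `x` is `S`-Cauchy. -/
def SCauchy (π : V) (S : Set X) (x : ℕ → X) : Prop :=
  ∃ δ : ℕ → V, TendstoPiAdic π δ ∧ ∀ l n m : ℕ, l ≤ n → l ≤ m → x n - x m ∈ δ l • S

/-- A bornological `V`-module is separated if limits of convergent sequences are unique. -/
def BornSeparated (π : V) (𝓑 : ModBornology V X) : Prop :=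
  ∀ (x : ℕ → X) (l₁ l₂ : X), ConvTo π 𝓑 x l₁ → ConvTo π 𝓑 x l₂ → l₁ = l₂

/-- A bornological `V`-module is complete if it is separated and every `S`-Cauchy sequence
`S'`-converges for some bounded `S'` depending only on `S`. -/
def BornComplete (π : V) (𝓑 : ModBornology V X) : Prop :=
  BornSeparated π 𝓑 ∧ ∀ S : Set X, 𝓑.IsBounded S → ∃ S' : Set X, 𝓑.IsBounded S' ∧
    ∀ x : ℕ → X, SCauchy π S x → ∃ l : X, SConvTo π S' x l

/-- A linear map is bounded if it maps bounded sets to bounded sets. -/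
def BoundedMap (𝓑X : ModBornology V X) (𝓑Y : ModBornology V Y) (f : X →ₗ[V] Y) : Prop :=
  ∀ ⦃s : Set X⦄, 𝓑X.IsBounded s → 𝓑Y.IsBounded (f '' s)

end Born

open Born

namespace BornAux

open Born

variable {V : Type u} [CommRing V] {X : Type v} [AddCommGroup X] [Module V X]

lemma mem_psmul {a : V} {Y : Submodule V X} {x : X} :
    x ∈ (a • Y : Submodule V X) ↔ ∃ y ∈ Y, a • y = x := by
  constructor
  · rintro ⟨y, hy, rfl⟩
    exact ⟨y, hy, rfl⟩
  · rintro ⟨y, hy, rfl⟩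
    exact Submodule.smul_mem_pointwise_smul y a Y hy

lemma psmul_le {π : V} {Y Z : Submodule V X} (h : Y ≤ Z) {a b : ℕ} (hab : b ≤ a) :
    (π ^ a • Y : Submodule V X) ≤ π ^ b • Z := by
  intro x hx
  obtain ⟨y, hy, rfl⟩ := mem_psmul.mp hx
  refine mem_psmul.mpr ⟨π ^ (a - b) • y, Z.smul_mem _ (h hy), ?_⟩
  rw [← mul_smul, ← pow_add]
  congr 2
  omega

/-- Convergence controlled by a submodule. -/
def PConv (π : V) (Y : Submodule V X) (x : ℕ → X) (l : X) : Prop :=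
  ∀ m : ℕ, ∃ N : ℕ, ∀ n ≥ N, x n - l ∈ (π ^ m • Y : Submodule V X)

lemma PConv.const (π : V) (Y : Submodule V X) (a : X) : PConv π Y (fun _ => a) a := by
  intro m
  exact ⟨0, fun n _ => by simpa using (π ^ m • Y).zero_mem⟩

lemma PConv.add {π : V} {Y : Submodule V X} {x₁ x₂ : ℕ → X} {l₁ l₂ : X}
    (h₁ : PConv π Y x₁ l₁) (h₂ : PConv π Y x₂ l₂) :
    PConv π Y (fun n => x₁ n + x₂ n) (l₁ + l₂) := by
  intro m
  obtain ⟨N₁, hN₁⟩ := h₁ m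
  obtain ⟨N₂, hN₂⟩ := h₂ m
  refine ⟨max N₁ N₂, fun n hn => ?_⟩
  have : x₁ n + x₂ n - (l₁ + l₂) = (x₁ n - l₁) + (x₂ n - l₂) := by abel
  rw [this]
  exact (π ^ m • Y).add_mem (hN₁ n (le_trans (le_max_left _ _) hn))
    (hN₂ n (le_trans (le_max_right _ _) hn))

lemma PConv.psmul {π : V} {Y : Submodule V X} {x : ℕ → X} {l : X} (c : V)
    (h : PConv π Y x l) : PConv π Y (fun n => c • x n) (c • l) := by
  intro m
  obtain ⟨N, hN⟩ := h m
  refine ⟨N, fun n hn => ?_⟩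
  have : c • x n - c • l = c • (x n - l) := by rw [smul_sub]
  rw [this]
  exact (π ^ m • Y).smul_mem c (hN n hn)

lemma PConv.sub {π : V} {Y : Submodule V X} {x₁ x₂ : ℕ → X} {l₁ l₂ : X}
    (h₁ : PConv π Y x₁ l₁) (h₂ : PConv π Y x₂ l₂) :
    PConv π Y (fun n => x₁ n - x₂ n) (l₁ - l₂) := by
  have := h₁.add ((h₂.psmul (-1)))
  simpa [sub_eq_add_neg] using this

lemma PConv.shift {π : V} {Y : Submodule V X} {x : ℕ → X} {l : X} (k : ℕ)
    (h : PConv π Y x l) : PConv π Y (fun n => x (k + n)) l := by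
  intro m
  obtain ⟨N, hN⟩ := h m
  exact ⟨N, fun n hn => hN (k + n) (le_trans hn (Nat.le_add_left n k))⟩

lemma PConv.fsum {π : V} {Y : Submodule V X} {ι : Type*} (s : Finset ι)
    (x : ι → ℕ → X) (l : ι → X) (h : ∀ i ∈ s, PConv π Y (x i) (l i)) :
    PConv π Y (fun n => ∑ i ∈ s, x i n) (∑ i ∈ s, l i) := by
  classical
  induction s using Finset.induction_on with
  | empty => simpa using PConv.const π Y 0
  | insert _ _ hnot ih =>
    rename_i a s
    simp only [Finset.sum_insert hnot]
    exact (h a (Finset.mem_insert_self a s)).add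
      (ih (fun i hi => h i (Finset.mem_insert_of_mem hi)))

lemma PConv.mono {π : V} {Y Z : Submodule V X} (hYZ : Y ≤ Z) {x : ℕ → X} {l : X}
    (h : PConv π Y x l) : PConv π Z x l := by
  intro m
  obtain ⟨N, hN⟩ := h m
  exact ⟨N, fun n hn => psmul_le hYZ le_rfl (hN n hn)⟩

lemma mem_psmul_of_dvd {π δ : V} {m : ℕ} (hd : π ^ m ∣ δ) {S : Set X} {Y : Submodule V X}
    (hS : S ⊆ (Y : Set X)) {z : X} (hz : z ∈ δ • S) : z ∈ (π ^ m • Y : Submodule V X) := by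
  obtain ⟨s, hs, rfl⟩ := hz
  obtain ⟨c, rfl⟩ := hd
  exact mem_psmul.mpr ⟨c • s, Y.smul_mem c (hS hs), (mul_smul _ _ _).symm⟩

lemma SConvTo.pconv {π : V} {S : Set X} {Y : Submodule V X} (hSY : S ⊆ (Y : Set X))
    {x : ℕ → X} {l : X} (h : SConvTo π S x l) : PConv π Y x l := by
  obtain ⟨δ, hδ, hx⟩ := h
  intro m
  obtain ⟨N, hN⟩ := hδ m
  exact ⟨N, fun n hn => mem_psmul_of_dvd (hN n hn) hSY (hx n)⟩

lemma PConv.sconv {π : V} {Y : Submodule V X} {x : ℕ → X} {l : X}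
    (hmem : ∀ n, x n - l ∈ Y) (h : PConv π Y x l) : SConvTo π (Y : Set X) x l := by
  classical
  choose N hN using h
  set N₂ : ℕ → ℕ := fun m => m + (Finset.range (m + 1)).sup N with hN₂def
  have hN₂mono : Monotone N₂ := by
    intro a b hab
    exact add_le_add hab (Finset.sup_mono (Finset.range_subset_range.mpr (by omega)))
  have hN₂self : ∀ m, N m ≤ N₂ m := fun m =>
    le_trans (Finset.le_sup (Finset.mem_range.mpr (Nat.lt_succ_self m))) (Nat.le_add_left _ _)
  have hN₂ge : ∀ m, m ≤ N₂ m := fun m => Nat.le_add_right _ _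
  set c : ℕ → ℕ := fun n => Nat.findGreatest (fun m => N₂ m ≤ n) n with hcdef
  refine ⟨fun n => π ^ c n, ?_, ?_⟩
  · intro m
    refine ⟨N₂ m, fun n hn => pow_dvd_pow _ ?_⟩
    exact Nat.le_findGreatest (le_trans (hN₂ge m) hn) hn
  · intro n
    by_cases h0 : N₂ 0 ≤ n
    · have hP : N₂ (c n) ≤ n := Nat.findGreatest_spec (P := fun m => N₂ m ≤ n) (Nat.zero_le n) h0
      have hmem' : x n - l ∈ (π ^ c n • Y : Submodule V X) :=
        hN (c n) n (le_trans (hN₂self (c n)) hP)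
      obtain ⟨y, hy, hyx⟩ := mem_psmul.mp hmem'
      exact ⟨y, hy, hyx⟩
    · have hc0 : c n = 0 := by
        rw [hcdef]
        exact Nat.findGreatest_eq_zero_iff.mpr
          (fun k hk hkn hP => h0 (le_trans (hN₂mono (Nat.zero_le k)) hP))
      refine ⟨x n - l, hmem n, ?_⟩
      show π ^ c n • _ = _
      rw [hc0, pow_zero, one_smul]

lemma smod_iff {π : V} {Y : Submodule V X} (y z : ↥Y) (n : ℕ) :
    y ≡ z [SMOD ((Ideal.span {π}) ^ n • ⊤ : Submodule V ↥Y)] ↔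
      (y : X) - z ∈ (π ^ n • Y : Submodule V X) := by
  rw [SModEq.sub_mem, Ideal.span_singleton_pow, Submodule.ideal_span_singleton_smul]
  constructor
  · rintro ⟨w, -, hw⟩
    have hw' : π ^ n • w = y - z := hw
    refine mem_psmul.mpr ⟨(w : X), w.2, ?_⟩
    calc π ^ n • (w : X) = ((π ^ n • w : ↥Y) : X) := rfl
      _ = ((y - z : ↥Y) : X) := by rw [hw']
      _ = (y : X) - z := rfl
  · rintro ⟨w, hw, hww⟩
    refine ⟨⟨w, hw⟩, Submodule.mem_top, ?_⟩
    show π ^ n • (⟨w, hw⟩ : ↥Y) = y - z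
    exact Subtype.ext hww

lemma separated_haus {π : V} {𝓑 : ModBornology V X} (hs : BornSeparated π 𝓑)
    {Y : Submodule V X} (hY : 𝓑.IsBounded (Y : Set X)) :
    IsHausdorff (Ideal.span {π}) ↥Y := by
  constructor
  intro y hy
  have hy' : ∀ n : ℕ, (y : X) ∈ (π ^ n • Y : Submodule V X) := by
    intro n
    have := (smod_iff y 0 n).mp (hy n)
    simpa using this
  have h1 : ConvTo π 𝓑 (fun _ => (0 : X)) 0 := by
    refine ⟨{0}, 𝓑.isBounded_of_finite (Set.finite_singleton 0),
      fun _ => 0, fun m => ⟨0, fun n _ => dvd_zero _⟩, fun n => ⟨0, rfl, ?_⟩⟩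
    show (0 : V) • (0 : X) = (fun _ => (0:X)) n - 0
    simp
  have h2 : ConvTo π 𝓑 (fun _ => (0 : X)) (y : X) := by
    refine ⟨Y, hY, fun n => π ^ n, fun m => ⟨m, fun n hn => pow_dvd_pow _ hn⟩, fun n => ?_⟩
    obtain ⟨w, hw, hww⟩ := mem_psmul.mp (hy' n)
    refine ⟨-w, Y.neg_mem hw, ?_⟩
    show π ^ n • (-w) = (fun _ => (0:X)) n - (y : X)
    rw [smul_neg, hww]
    show -(y : X) = 0 - (y : X)
    abel
  exact Subtype.ext (hs _ _ _ h2 h1)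

lemma haus_cofinal_separated {π : V} {𝓑 : ModBornology V X}
    (h : ∀ S : Set X, 𝓑.IsBounded S → ∃ Y : Submodule V X, 𝓑.IsBounded (Y : Set X) ∧
      S ⊆ (Y : Set X) ∧ IsHausdorff (Ideal.span {π}) ↥Y) :
    BornSeparated π 𝓑 := by
  rintro x l₁ l₂ ⟨S₁, hS₁, δ₁, hδ₁, h₁⟩ ⟨S₂, hS₂, δ₂, hδ₂, h₂⟩
  obtain ⟨Y, hYb, hsub, hH⟩ := h (S₁ ∪ S₂) (𝓑.isBounded_union hS₁ hS₂)
  have hS₁Y : S₁ ⊆ (Y : Set X) := fun a ha => hsub (Or.inl ha)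
  have hS₂Y : S₂ ⊆ (Y : Set X) := fun a ha => hsub (Or.inr ha)
  have key : ∀ m : ℕ, l₁ - l₂ ∈ (π ^ m • Y : Submodule V X) := by
    intro m
    obtain ⟨N₁, hN₁⟩ := hδ₁ m
    obtain ⟨N₂, hN₂⟩ := hδ₂ m
    set n := max N₁ N₂
    have m₁ : x n - l₁ ∈ (π ^ m • Y : Submodule V X) :=
      mem_psmul_of_dvd (hN₁ n (le_max_left _ _)) hS₁Y (h₁ n)
    have m₂ : x n - l₂ ∈ (π ^ m • Y : Submodule V X) :=
      mem_psmul_of_dvd (hN₂ n (le_max_right _ _)) hS₂Y (h₂ n)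
    have : l₁ - l₂ = (x n - l₂) - (x n - l₁) := by abel
    rw [this]
    exact sub_mem m₂ m₁
  have memY : l₁ - l₂ ∈ Y := by
    obtain ⟨w, hw, hww⟩ := mem_psmul.mp (key 0)
    rw [← hww, pow_zero, one_smul]
    exact hw
  have := hH.haus ⟨l₁ - l₂, memY⟩ (fun n => (smod_iff _ _ n).mpr (by simpa using key n))
  have h0 : l₁ - l₂ = 0 := congrArg Subtype.val this
  exact sub_eq_zero.mp h0

/-- Fast Cauchy sequences inside a submodule. -/
def Fast (π : V) (T : Submodule V X) (t : ℕ → X) : Prop :=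
  (∀ n, t n ∈ T) ∧ ∀ n, t (n + 1) - t n ∈ (π ^ n • T : Submodule V X)

lemma Fast.sub_mem' {π : V} {T : Submodule V X} {t : ℕ → X} (h : Fast π T t) :
    ∀ l n m : ℕ, l ≤ n → l ≤ m → t n - t m ∈ (π ^ l • T : Submodule V X) := by
  have key : ∀ n j, t (n + j) - t n ∈ (π ^ n • T : Submodule V X) := by
    intro n j
    induction j with
    | zero => simpa using (π ^ n • T : Submodule V X).zero_mem
    | succ j ih =>
      have h2 := h.2 (n + j)
      have heq : t (n + (j + 1)) - t n = (t ((n + j) + 1) - t (n + j)) + (t (n + j) - t n) := by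
        abel
      rw [heq]
      exact add_mem (psmul_le le_rfl (Nat.le_add_right n j) h2) ih
  intro l n m hln hlm
  have h1 := key l (n - l)
  have h2 := key l (m - l)
  rw [Nat.add_sub_cancel' hln] at h1
  rw [Nat.add_sub_cancel' hlm] at h2
  have heq : t n - t m = (t n - t l) - (t m - t l) := by abel
  rw [heq]
  exact sub_mem h1 h2

lemma Fast.scauchy {π : V} {T : Submodule V X} {t : ℕ → X} (h : Fast π T t) :
    SCauchy π (T : Set X) t := by
  refine ⟨fun l => π ^ l, fun m => ⟨m, fun n hn => pow_dvd_pow _ hn⟩, fun l n m hln hlm => ?_⟩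
  obtain ⟨w, hw, hww⟩ := mem_psmul.mp (h.sub_mem' l n m hln hlm)
  exact ⟨w, hw, hww⟩

lemma cofinal_complete {π : V} {𝓑 : ModBornology V X}
    (h : ∀ S : Set X, 𝓑.IsBounded S → ∃ Y : Submodule V X, 𝓑.IsBounded (Y : Set X) ∧
      S ⊆ (Y : Set X) ∧ IsAdicComplete (Ideal.span {π}) ↥Y) :
    BornComplete π 𝓑 := by
  have hsep : BornSeparated π 𝓑 := haus_cofinal_separated fun S hS => by
    obtain ⟨Y, h1, h2, h3⟩ := h S hS
    exact ⟨Y, h1, h2, h3.toIsHausdorff⟩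
  refine ⟨hsep, fun S hS => ?_⟩
  obtain ⟨Y, hYb, hSY, hYc⟩ := h S hS
  refine ⟨(Y : Set X), hYb, fun x hx => ?_⟩
  obtain ⟨δ, hδ, hxc⟩ := hx
  choose Nd hNd using hδ
  set M : ℕ → ℕ := fun m => (Finset.range (m + 1)).sup Nd with hMdef
  have hMmono : Monotone M := fun a b hab =>
    Finset.sup_mono (Finset.range_subset_range.mpr (by omega))
  have hMge : ∀ m, Nd m ≤ M m := fun m =>
    Finset.le_sup (Finset.mem_range.mpr (Nat.lt_succ_self m))
  have hYmem : ∀ n m : ℕ, x n - x m ∈ Y := by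
    intro n m
    obtain ⟨s, hs, hss⟩ := hxc (min n m) n m (min_le_left _ _) (min_le_right _ _)
    rw [← hss]
    exact Y.smul_mem _ (hSY hs)
  have key : ∀ m n n', M m ≤ n → M m ≤ n' → x n - x n' ∈ (π ^ m • Y : Submodule V X) := by
    intro m n n' hn hn'
    exact mem_psmul_of_dvd (hNd m (M m) (hMge m)) hSY (hxc (M m) n n' hn hn')
  set f : ℕ → ↥Y := fun m => ⟨x (M m) - x 0, hYmem _ _⟩ with hfdef
  have hf : ∀ {m n : ℕ}, m ≤ n →
      f m ≡ f n [SMOD ((Ideal.span {π}) ^ m • ⊤ : Submodule V ↥Y)] := by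
    intro m n hmn
    rw [smod_iff]
    have heq : ((f m : X)) - (f n : X) = x (M m) - x (M n) := by
      show (x (M m) - x 0) - (x (M n) - x 0) = _
      abel
    rw [heq]
    exact key m (M m) (M n) le_rfl (hMmono hmn)
  obtain ⟨L, hL⟩ := hYc.toIsPrecomplete.prec hf
  have hL' : ∀ m, (x (M m) - x 0) - (L : X) ∈ (π ^ m • Y : Submodule V X) := fun m =>
    (smod_iff _ _ m).mp (hL m)
  have hP : PConv π Y x (x 0 + (L : X)) := by
    intro m
    refine ⟨M m, fun n hn => ?_⟩
    have heq : x n - (x 0 + (L : X)) = (x n - x (M m)) + ((x (M m) - x 0) - L) := by abel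
    rw [heq]
    exact add_mem (key m n (M m) hn le_rfl) (hL' m)
  have hmem : ∀ n, x n - (x 0 + (L : X)) ∈ Y := by
    intro n
    have heq : x n - (x 0 + (L : X)) = (x n - x 0) - L := by abel
    rw [heq]
    exact sub_mem (hYmem n 0) L.2
  exact ⟨x 0 + L, hP.sconv hmem⟩

lemma complete_cofinal {π : V} {𝓑 : ModBornology V X} (hC : BornComplete π 𝓑) :
    ∀ S : Set X, 𝓑.IsBounded S → ∃ Y : Submodule V X,
      𝓑.IsBounded (Y : Set X) ∧ S ⊆ (Y : Set X) ∧ IsAdicComplete (Ideal.span {π}) ↥Y := by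
  intro S hS
  classical
  set T : Submodule V X := Submodule.span V S with hTdef
  have hTb : 𝓑.IsBounded (T : Set X) := 𝓑.isBounded_span hS
  obtain ⟨S', hS'b, hS'⟩ := hC.2 (T : Set X) hTb
  set W : Submodule V X := Submodule.span V ((T : Set X) ∪ S') with hWdef
  have hWb : 𝓑.IsBounded (W : Set X) := 𝓑.isBounded_span (𝓑.isBounded_union hTb hS'b)
  have hTW : T ≤ W := fun a ha => Submodule.subset_span (Or.inl ha)
  have hS'W : S' ⊆ (W : Set X) := fun a ha => Submodule.subset_span (Or.inr ha)
  have climit : ∀ t : ℕ → X, Fast π T t → ∃ l, PConv π W t l := by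
    intro t ht
    obtain ⟨l, hl⟩ := hS' t ht.scauchy
    exact ⟨l, SConvTo.pconv hS'W hl⟩
  set Y : Submodule V X :=
    { carrier := {l | ∃ t : ℕ → X, Fast π T t ∧ PConv π W t l}
      add_mem' := by
        rintro a b ⟨t₁, h₁, p₁⟩ ⟨t₂, h₂, p₂⟩
        refine ⟨fun n => t₁ n + t₂ n,
          ⟨fun n => T.add_mem (h₁.1 n) (h₂.1 n), fun n => ?_⟩, p₁.add p₂⟩
        have heq : (t₁ (n+1) + t₂ (n+1)) - (t₁ n + t₂ n)
            = (t₁ (n+1) - t₁ n) + (t₂ (n+1) - t₂ n) := by abel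
        rw [heq]
        exact add_mem (h₁.2 n) (h₂.2 n)
      zero_mem' := ⟨fun _ => 0, ⟨fun _ => T.zero_mem, fun n => by
          simpa using (π ^ n • T : Submodule V X).zero_mem⟩, PConv.const π W 0⟩
      smul_mem' := by
        rintro c a ⟨t, h₁, p₁⟩
        refine ⟨fun n => c • t n,
          ⟨fun n => T.smul_mem c (h₁.1 n), fun n => ?_⟩, p₁.psmul c⟩
        have heq : c • t (n+1) - c • t n = c • (t (n+1) - t n) := (smul_sub c _ _).symm
        rw [heq]
        exact Submodule.smul_mem _ c (h₁.2 n) } with hYdef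
  have hmemY : ∀ a : X, a ∈ Y ↔ ∃ t : ℕ → X, Fast π T t ∧ PConv π W t a := fun a => Iff.rfl
  have hTY : ∀ a ∈ T, a ∈ Y := by
    intro a ha
    exact (hmemY a).mpr ⟨fun _ => a, ⟨fun _ => ha, fun n => by
      simpa using (π ^ n • T : Submodule V X).zero_mem⟩, PConv.const π W a⟩
  have hYW : ∀ l ∈ Y, l ∈ W := by
    intro l hl
    obtain ⟨t, ht, hp⟩ := (hmemY l).mp hl
    obtain ⟨N, hN⟩ := hp 0
    have h1 : t N - l ∈ W := by
      obtain ⟨w, hw, hww⟩ := mem_psmul.mp (hN N le_rfl)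
      rw [← hww, pow_zero, one_smul]
      exact hw
    have heq : l = t N - (t N - l) := by abel
    rw [heq]
    exact sub_mem (hTW (ht.1 N)) h1
  have hYb : 𝓑.IsBounded (Y : Set X) := 𝓑.isBounded_subset hWb (fun a ha => hYW a ha)
  refine ⟨Y, hYb, fun a ha => hTY a (Submodule.subset_span ha), ?_⟩
  haveI hH : IsHausdorff (Ideal.span {π}) ↥Y := separated_haus hC.1 hYb
  haveI hPre : IsPrecomplete (Ideal.span {π}) ↥Y := by
   constructor
   intro f hf
   set z : ℕ → X := fun k => (f k : X) with hzdef
   have hzY : ∀ k, z k ∈ Y := fun k => (f k).2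
   have hz : ∀ {m n : ℕ}, m ≤ n → z m - z n ∈ (π ^ m • Y : Submodule V X) := by
     intro m n hmn
     exact (smod_iff _ _ m).mp (hf hmn)
   have hzk : ∀ k, z (k+1) - z k ∈ (π ^ k • Y : Submodule V X) := by
     intro k
     have h1 := hz (Nat.le_succ k)
     have heq : z (k+1) - z k = -(z k - z (k+1)) := by abel
     rw [heq]
     exact neg_mem h1
   choose y hyY hy using fun k => mem_psmul.mp (hzk k)
   have hyY' : ∀ k, ∃ t : ℕ → X, Fast π T t ∧ PConv π W t (y k) :=
     fun k => (hmemY (y k)).mp (hyY k)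
   choose t ht using hyY'
   obtain ⟨s, hsF, hsP⟩ := (hmemY (z 0)).mp (hzY 0)
   set u : ℕ → X := fun n => s n + ∑ k ∈ Finset.range n, π ^ k • t k n with hudef
   have huF : Fast π T u := by
     constructor
     · intro n
       exact T.add_mem (hsF.1 n) (Submodule.sum_mem T fun k _ => T.smul_mem _ ((ht k).1.1 n))
     · intro n
       have heq : u (n+1) - u n
           = ((s (n+1) - s n) + ∑ k ∈ Finset.range n, π ^ k • (t k (n+1) - t k n))
             + π ^ n • t n (n+1) := by
         simp only [hudef, Finset.sum_range_succ, smul_sub, Finset.sum_sub_distrib]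
         abel
       rw [heq]
       refine add_mem (add_mem (hsF.2 n) (Submodule.sum_mem _ fun k _ => ?_)) ?_
       · exact Submodule.smul_mem _ _ ((ht k).1.2 n)
       · exact mem_psmul.mpr ⟨t n (n+1), (ht n).1.1 (n+1), rfl⟩
   obtain ⟨l, hl⟩ := climit u huF
   have hlY : l ∈ Y := (hmemY l).mpr ⟨u, huF, hl⟩
   have hzk_eq : ∀ k, z k = z 0 + ∑ j ∈ Finset.range k, π ^ j • y j := by
     intro k
     induction k with
     | zero => simp
     | succ k ih =>
       rw [Finset.sum_range_succ, hy k, ← add_assoc, ← ih]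
       abel
   have main : ∀ k, z k - l ∈ (π ^ k • Y : Submodule V X) := by
     intro k
     set d : ℕ → X := fun n => ∑ i ∈ Finset.range n, π ^ i • t (k + i) (k + n) with hddef
     have hdF : Fast π T d := by
       constructor
       · intro n
         exact Submodule.sum_mem T fun i _ => T.smul_mem _ ((ht (k+i)).1.1 (k+n))
       · intro n
         have heq : d (n+1) - d n
             = (∑ i ∈ Finset.range n, π ^ i • (t (k+i) (k+(n+1)) - t (k+i) (k+n)))
               + π ^ n • t (k+n) (k+(n+1)) := by
           simp only [hddef, Finset.sum_range_succ, smul_sub, Finset.sum_sub_distrib]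
           abel
         rw [heq]
         refine add_mem (Submodule.sum_mem _ fun i _ => ?_) ?_
         · exact Submodule.smul_mem _ _
             (psmul_le le_rfl (Nat.le_add_left n k) ((ht (k+i)).1.2 (k+n)))
         · exact mem_psmul.mpr ⟨t (k+n) (k+(n+1)), (ht (k+n)).1.1 _, rfl⟩
     obtain ⟨lc, hlc⟩ := climit d hdF
     have hlcY : lc ∈ Y := (hmemY lc).mpr ⟨d, hdF, hlc⟩
     have hgP : PConv π W (fun n => s n + ∑ j ∈ Finset.range k, π ^ j • t j n) (z k) := by
       rw [hzk_eq k]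
       exact hsP.add (PConv.fsum (Finset.range k) (fun j n => π ^ j • t j n)
         (fun j => π ^ j • y j) (fun j _ => ((ht j).2).psmul (π ^ j)))
     have hid : ∀ n, π ^ k • d n
         = u (k + n) - (s (k + n) + ∑ j ∈ Finset.range k, π ^ j • t j (k + n)) := by
       intro n
       have h1 : u (k + n) = s (k + n) + ∑ j ∈ Finset.range (k + n), π ^ j • t j (k + n) := by
         simp only [hudef]
       rw [h1, Finset.sum_range_add]
       have h2 : π ^ k • d n = ∑ i ∈ Finset.range n, π ^ (k + i) • t (k + i) (k + n) := by
         simp only [hddef, Finset.smul_sum, smul_smul, ← pow_add]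
       rw [h2]
       abel
     have hseq2 : PConv π W (fun n => π ^ k • d n) (l - z k) := by
       have h1 : PConv π W (fun n => u (k + n)) l := hl.shift k
       have h2 : PConv π W
           (fun n => s (k + n) + ∑ j ∈ Finset.range k, π ^ j • t j (k + n)) (z k) := hgP.shift k
       have h3 := h1.sub h2
       have hfe : (fun n => π ^ k • d n)
           = fun n => u (k + n) - (s (k + n) + ∑ j ∈ Finset.range k, π ^ j • t j (k + n)) :=
         funext hid
       rw [hfe]
       exact h3
     have hseq1 : PConv π W (fun n => π ^ k • d n) (π ^ k • lc) := hlc.psmul (π ^ k)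
     have hdT : ∀ n, d n ∈ T := hdF.1
     have hWmem1 : ∀ n, (π ^ k • d n) - π ^ k • lc ∈ W := fun n =>
       sub_mem (W.smul_mem _ (hTW (hdT n))) (W.smul_mem _ (hYW lc hlcY))
     have hWmem2 : ∀ n, (π ^ k • d n) - (l - z k) ∈ W := fun n =>
       sub_mem (W.smul_mem _ (hTW (hdT n))) (sub_mem (hYW l hlY) (hYW (z k) (hzY k)))
     have c1 : ConvTo π 𝓑 (fun n => π ^ k • d n) (π ^ k • lc) :=
       ⟨(W : Set X), hWb, hseq1.sconv hWmem1⟩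
     have c2 : ConvTo π 𝓑 (fun n => π ^ k • d n) (l - z k) :=
       ⟨(W : Set X), hWb, hseq2.sconv hWmem2⟩
     have heq2 : π ^ k • lc = l - z k := hC.1 _ _ _ c1 c2
     have heq3 : z k - l = π ^ k • (-lc) := by
       rw [smul_neg, heq2]
       abel
     rw [heq3]
     exact mem_psmul.mpr ⟨-lc, Y.neg_mem hlcY, rfl⟩
   exact ⟨⟨l, hlY⟩, fun n => (smod_iff _ _ n).mpr (main n)⟩
  exact IsAdicComplete.mk

end BornAux

open BornAux

/-- Let `V` be a complete discrete valuation ring with uniformizer `π` and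
let `X` be a bornological `V`-module with bornology `𝓑`.  Then:
(i) a sequence in `X` converges if and only if it is contained in a bounded `V`-submodule
`Y ⊆ X` and converges in `Y` with respect to the `π`-adic topology;
(ii) `X` is separated iff every bounded `V`-submodule of `X` is `π`-adically separated, iff
the bounded `π`-adically separated `V`-submodules are cofinal among bounded sets;
(iii) `X` is complete iff the bounded `π`-adically complete `V`-submodules are cofinal. -/
theorem separated_complete_characterisation
    {V : Type u} [CommRing V] [IsDomain V] [IsDiscreteValuationRing V]
    (π : V) (hπ : Irreducible π) (hV : IsAdicComplete (Ideal.span {π}) V)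
    {X : Type v} [AddCommGroup X] [Module V X] (𝓑 : ModBornology V X) :
    -- (i)
    ((∀ x : ℕ → X,
        (∃ l : X, ConvTo π 𝓑 x l) ↔
          ∃ Y : Submodule V X, 𝓑.IsBounded (Y : Set X) ∧ (∀ n, x n ∈ Y) ∧
            ∃ l ∈ Y, ∀ m : ℕ, ∃ N : ℕ, ∀ n ≥ N, x n - l ∈ (π ^ m • Y : Submodule V X))
    -- (ii)
    ∧ (BornSeparated π 𝓑 ↔
        ∀ Y : Submodule V X, 𝓑.IsBounded (Y : Set X) → IsHausdorff (Ideal.span {π}) Y)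
    ∧ (BornSeparated π 𝓑 ↔
        ∀ S : Set X, 𝓑.IsBounded S → ∃ Y : Submodule V X,
          𝓑.IsBounded (Y : Set X) ∧ S ⊆ (Y : Set X) ∧ IsHausdorff (Ideal.span {π}) Y)
    -- (iii)
    ∧ (BornComplete π 𝓑 ↔
        ∀ S : Set X, 𝓑.IsBounded S → ∃ Y : Submodule V X,
          𝓑.IsBounded (Y : Set X) ∧ S ⊆ (Y : Set X) ∧ IsAdicComplete (Ideal.span {π}) Y)) := by
  refine ⟨?_, ?_, ?_, ?_⟩
  · -- (i)
    intro x
    constructor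
    · rintro ⟨l, S, hS, hsc⟩
      set Y : Submodule V X := Submodule.span V (S ∪ {l}) with hYdef
      have hYb : 𝓑.IsBounded (Y : Set X) :=
        𝓑.isBounded_span (𝓑.isBounded_union hS (𝓑.isBounded_of_finite (Set.finite_singleton l)))
      have hSY : S ⊆ (Y : Set X) := fun a ha => Submodule.subset_span (Or.inl ha)
      have hlY : l ∈ Y := Submodule.subset_span (Or.inr rfl)
      refine ⟨Y, hYb, ?_, l, hlY, SConvTo.pconv hSY hsc⟩
      intro n
      obtain ⟨δ, hδ, hx⟩ := hsc
      obtain ⟨s, hs, hss⟩ := hx n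
      have hss' : δ n • s = x n - l := hss
      have heq : x n = δ n • s + l := by rw [hss']; abel
      rw [heq]
      exact Y.add_mem (Y.smul_mem _ (hSY hs)) hlY
    · rintro ⟨Y, hYb, hmem, l, hlY, hP⟩
      exact ⟨l, (Y : Set X), hYb, PConv.sconv (fun n => sub_mem (hmem n) hlY) hP⟩
  · -- (ii) first
    constructor
    · intro hsep Y hYb
      exact separated_haus hsep hYb
    · intro hH
      exact haus_cofinal_separated fun S hS =>
        ⟨Submodule.span V S, 𝓑.isBounded_span hS, Submodule.subset_span,
          hH _ (𝓑.isBounded_span hS)⟩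
  · -- (ii) second
    constructor
    · intro hsep S hS
      exact ⟨Submodule.span V S, 𝓑.isBounded_span hS, Submodule.subset_span,
        separated_haus hsep (𝓑.isBounded_span hS)⟩
    · exact haus_cofinal_separated
  · -- (iii)
    exact ⟨complete_cofinal, cofinal_complete⟩
end

section
/- Let R be a bornological K-algebra, M ⊆ R a bounded V-submodule, j ∈ ℤ and c ∈ ℤ with c ≥ 1. Then ρ(π^j M^c) = ε^j · ρ(M)^c, where ρ denotes the spectral radius. -/
open Pointwise

universe u v w

namespace Born

section SpectralRadius

variable {V : Type u} [CommRing V]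

/-- `⌈log_ε r⌉`, the exponent appearing in the operation `r ⋆ M = π ^ ⌈log_ε r⌉ • M`. -/
noncomputable def cexp (ε r : ℝ) : ℤ := ⌈Real.log r / Real.log ε⌉

section Valg

variable {A : Type v} [Ring A] [Algebra V A]

/-- An algebra bornology: a module bornology for which multiplication is bounded. -/
def IsAlgBorn (𝓑 : ModBornology V A) : Prop :=
  ∀ ⦃s t : Set A⦄, 𝓑.IsBounded s → 𝓑.IsBounded t → 𝓑.IsBounded (s * t)

/-- `r ⋆ M = π ^ ⌈log_ε r⌉ • M` for `r ≤ 1` in a `V`-algebra (nonnegative exponent). -/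
noncomputable def starV (π : V) (ε r : ℝ) (M : Submodule V A) : Submodule V A :=
  π ^ ((cexp ε r).toNat) • M

/-- The submodule of finite sums `Σ_{n ≥ 0} r^{-n} ⋆ M ^ n`. -/
noncomputable def geomSumV (π : V) (ε r : ℝ) (M : Submodule V A) : Submodule V A :=
  ⨆ n : ℕ, starV π ε (r ^ (-(n : ℤ))) (M ^ n)

/-- `ρ(M) ≤ 1` in a bornological `V`-algebra: the submodule `Σ_{n} r^{-n} ⋆ M^n` is
bounded for every `r > 1`. -/
noncomputable def SpecLeOne (π : V) (ε : ℝ) (𝓑 : ModBornology V A) (M : Submodule V A) : Prop :=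
  ∀ r : ℝ, 1 < r → 𝓑.IsBounded (geomSumV π ε r M : Set A)

end Valg

section Kalg

variable (K : Type u) [Field K] [Algebra V K]
variable {A : Type v} [Ring A] [Algebra K A] [Algebra V A] [IsScalarTower V K A]

/-- Scalar multiplication by `c : K` as a `V`-linear map on a `K`-algebra. -/
noncomputable def kSmul (c : K) : A →ₗ[V] A :=
  LinearMap.restrictScalars V (LinearMap.lsmul K A c)

/-- `r ⋆ M = π ^ ⌈log_ε r⌉ • M` in a `K`-algebra (integer exponent). -/
noncomputable def starK (π : V) (ε r : ℝ) (M : Submodule V A) : Submodule V A :=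
  M.map (kSmul K ((algebraMap V K π) ^ (cexp ε r)))

/-- The submodule of finite sums `Σ_{n ≥ 0} r^{-n} ⋆ M ^ n` in a `K`-algebra. -/
noncomputable def geomSumK (π : V) (ε r : ℝ) (M : Submodule V A) : Submodule V A :=
  ⨆ n : ℕ, starK K π ε (r ^ (-(n : ℤ))) (M ^ n)

/-- The spectral radius of a bounded `V`-submodule `M` of a bornological `K`-algebra:
the infimum (in `ℝ≥0∞`) of all `r > 0` such that `Σ_n r^{-n} ⋆ M^n` is bounded. -/
noncomputable def specRad (π : V) (ε : ℝ) (𝓑 : ModBornology V A) (M : Submodule V A) : ENNReal :=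
  sInf {ρ : ENNReal | ∃ r : ℝ, 0 < r ∧ ρ = ENNReal.ofReal r ∧
    𝓑.IsBounded (geomSumK K π ε r M : Set A)}

/-- A bornological `K`-algebra structure: multiplication is bounded and multiplication
by `π⁻¹` (the inverse of multiplication by `π`) is bounded. -/
def IsKAlgBorn (π : V) (𝓑 : ModBornology V A) : Prop :=
  IsAlgBorn 𝓑 ∧ ∀ ⦃s : Set A⦄, 𝓑.IsBounded s → 𝓑.IsBounded (kSmul (V := V) K ((algebraMap V K π)⁻¹) '' s)

end Kalg

end SpectralRadius

end Born

open Born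

namespace SpecAux

open Born

variable {V : Type u} [CommRing V] {K : Type u} [Field K] [Algebra V K]
  {A : Type v} [Ring A] [Algebra K A] [Algebra V A] [IsScalarTower V K A]

lemma kSmul_apply (a : K) (x : A) : kSmul (V := V) K a x = a • x := rfl

lemma kSmul_one : (kSmul (V := V) K (1:K) : A →ₗ[V] A) = LinearMap.id := by
  ext x
  show (1 : K) • x = x
  rw [one_smul]

lemma kSmul_mul (a b : K) :
    (kSmul (V := V) K (a*b) : A →ₗ[V] A) = (kSmul (V := V) K a).comp (kSmul (V := V) K b) := by
  ext x
  show (a * b) • x = a • (b • x)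
  rw [mul_smul]

lemma map_kSmul_mul (a b : K) (P Q : Submodule V A) :
    (P.map (kSmul (V := V) K a)) * (Q.map (kSmul (V := V) K b))
      = (P * Q).map (kSmul (V := V) K (a * b)) := by
  apply le_antisymm
  · rw [Submodule.mul_le]
    rintro _ ⟨p, hp, rfl⟩ _ ⟨q, hq, rfl⟩
    exact ⟨p * q, Submodule.mul_mem_mul hp hq, (smul_mul_smul_comm a p b q).symm⟩
  · rw [Submodule.map_le_iff_le_comap, Submodule.mul_le]
    intro p hp q hq
    have h : kSmul (V := V) K (a*b) (p*q) = (kSmul (V := V) K a p) * (kSmul (V := V) K b q) :=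
      (smul_mul_smul_comm a p b q).symm
    exact Submodule.mem_comap.mpr (h ▸ Submodule.mul_mem_mul
      (Submodule.mem_map_of_mem hp) (Submodule.mem_map_of_mem hq))

lemma map_kSmul_pow (a : K) (P : Submodule V A) (n : ℕ) :
    (P.map (kSmul (V := V) K a)) ^ n = (P ^ n).map (kSmul (V := V) K (a ^ n)) := by
  induction n with
  | zero => simp [kSmul_one]
  | succ n ih => rw [pow_succ, ih, map_kSmul_mul, ← pow_succ, ← pow_succ]

lemma smul_pow_mem (π : V) (d : ℕ) (P : Submodule V A) {x : A} (hx : x ∈ P) :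
    (algebraMap V K π) ^ d • x ∈ P := by
  rw [← map_pow, algebraMap_smul]
  exact P.smul_mem _ hx

lemma map_zpow_le (π : V) (hπ : algebraMap V K π ≠ 0) (P : Submodule V A) {a b : ℤ} (h : a ≤ b) :
    P.map (kSmul (V := V) K ((algebraMap V K π) ^ b))
      ≤ P.map (kSmul (V := V) K ((algebraMap V K π) ^ a)) := by
  rintro _ ⟨x, hx, rfl⟩
  refine ⟨(algebraMap V K π) ^ (b - a).toNat • x, smul_pow_mem π _ P hx, ?_⟩
  show (algebraMap V K π) ^ a • ((algebraMap V K π) ^ (b-a).toNat • x)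
      = (algebraMap V K π) ^ b • x
  rw [smul_smul, ← zpow_natCast (algebraMap V K π) (b-a).toNat,
    Int.toNat_of_nonneg (by omega), ← zpow_add₀ hπ]
  congr 2
  omega

lemma map_map_kSmul (a b : K) (P : Submodule V A) :
    (P.map (kSmul (V := V) K b)).map (kSmul (V := V) K a)
      = P.map (kSmul (V := V) K (a * b)) := by
  rw [kSmul_mul]; exact (Submodule.map_comp _ _ P).symm

lemma cexp_zpow (ε : ℝ) (s : ℝ) (m : ℤ) :
    cexp ε (s ^ m) = ⌈(m : ℝ) * (Real.log s / Real.log ε)⌉ := by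
  unfold cexp
  rw [Real.log_zpow, mul_div_assoc]

lemma key_exponent (ε : ℝ) (hε0 : 0 < ε) (hε1 : ε < 1) {s : ℝ} (hs : 0 < s)
    (j : ℤ) (c n : ℕ) :
    j * n + cexp ε ((ε ^ j * s ^ c) ^ (-(n:ℤ))) = cexp ε (s ^ (-((c*n : ℕ) : ℤ))) := by
  have hlε : Real.log ε ≠ 0 := ne_of_lt (Real.log_neg hε0 hε1)
  rw [cexp_zpow, cexp_zpow,
    Real.log_mul (by positivity) (by positivity), Real.log_zpow, Real.log_pow]
  have heq : (↑(-(n:ℤ)) : ℝ) * ((↑j * Real.log ε + ↑c * Real.log s) / Real.log ε)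
      = (↑(-((c*n : ℕ) : ℤ)) : ℝ) * (Real.log s / Real.log ε) + (↑(-(j*n)) : ℤ) := by
    push_cast
    field_simp
    ring
  rw [heq, Int.ceil_add_intCast]
  push_cast
  ring

lemma term_eq (π : V) (hπ : algebraMap V K π ≠ 0) (ε : ℝ) (hε0 : 0 < ε) (hε1 : ε < 1)
    {s : ℝ} (hs : 0 < s) (j : ℤ) (c : ℕ) (M : Submodule V A) (n : ℕ) :
    starK K π ε ((ε ^ j * s ^ c) ^ (-(n:ℤ)))
        (((M ^ c).map (kSmul (V := V) K ((algebraMap V K π) ^ j))) ^ n)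
      = starK K π ε (s ^ (-((c*n : ℕ) : ℤ))) (M ^ (c*n)) := by
  unfold starK
  rw [map_kSmul_pow, ← pow_mul, ← zpow_natCast ((algebraMap V K π) ^ j) n, ← zpow_mul,
    map_map_kSmul, ← zpow_add₀ hπ]
  have h := key_exponent ε hε0 hε1 hs j c n
  have h2 : cexp ε ((ε ^ j * s ^ c) ^ (-(n:ℤ))) + j * n = cexp ε (s ^ (-((c*n : ℕ) : ℤ))) := by
    omega
  rw [h2]

lemma geomSum_le (π : V) (hπ : algebraMap V K π ≠ 0) (ε : ℝ) (hε0 : 0 < ε) (hε1 : ε < 1)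
    {s : ℝ} (hs : 0 < s) (j : ℤ) (c : ℕ) (M : Submodule V A) :
    geomSumK K π ε (ε ^ j * s ^ c) ((M ^ c).map (kSmul (V := V) K ((algebraMap V K π) ^ j)))
      ≤ geomSumK K π ε s M := by
  unfold geomSumK
  refine iSup_le fun n => ?_
  rw [term_eq π hπ ε hε0 hε1 hs j c M n]
  exact le_iSup (fun m : ℕ => starK K π ε (s ^ (-(m:ℤ))) (M ^ m)) (c*n)

section Bounded

variable {𝓑 : ModBornology V A}

lemma bounded_submodule_sup {P Q : Submodule V A}
    (hP : 𝓑.IsBounded (P : Set A)) (hQ : 𝓑.IsBounded (Q : Set A)) :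
    𝓑.IsBounded ((P ⊔ Q : Submodule V A) : Set A) := by
  have h : ((P ⊔ Q : Submodule V A) : Set A)
      = (Submodule.span V ((P : Set A) ∪ (Q : Set A)) : Set A) := by
    rw [Submodule.span_union, Submodule.span_eq, Submodule.span_eq]
  rw [h]
  exact 𝓑.isBounded_span (𝓑.isBounded_union hP hQ)

lemma bounded_submodule_mul (halg : IsAlgBorn 𝓑) {P Q : Submodule V A}
    (hP : 𝓑.IsBounded (P : Set A)) (hQ : 𝓑.IsBounded (Q : Set A)) :
    𝓑.IsBounded ((P * Q : Submodule V A) : Set A) := by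
  have hle : P * Q ≤ Submodule.span V ((P : Set A) * (Q : Set A)) := by
    rw [Submodule.mul_le]
    intro p hp q hq
    exact Submodule.subset_span (Set.mul_mem_mul hp hq)
  exact 𝓑.isBounded_subset (𝓑.isBounded_span (halg hP hQ)) hle

lemma bounded_one : 𝓑.IsBounded ((1 : Submodule V A) : Set A) := by
  rw [Submodule.one_eq_span]
  exact 𝓑.isBounded_span (𝓑.isBounded_of_finite (Set.finite_singleton 1))

lemma bounded_pow (halg : IsAlgBorn 𝓑) {P : Submodule V A}
    (hP : 𝓑.IsBounded (P : Set A)) (n : ℕ) :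
    𝓑.IsBounded ((P ^ n : Submodule V A) : Set A) := by
  induction n with
  | zero => rw [pow_zero]; exact bounded_one
  | succ n ih => rw [pow_succ]; exact bounded_submodule_mul halg ih hP

lemma bounded_image_inv_pow {π : V} (h : IsKAlgBorn K π 𝓑) (m : ℕ) {S : Set A}
    (hS : 𝓑.IsBounded S) :
    𝓑.IsBounded ((kSmul (V := V) K (((algebraMap V K π))⁻¹ ^ m)) '' S) := by
  induction m with
  | zero => simpa [kSmul_one] using hS
  | succ m ih =>
    rw [pow_succ, mul_comm, kSmul_mul, LinearMap.coe_comp, Set.image_comp]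
    exact h.2 ih

lemma bounded_map_zpow {π : V} (h : IsKAlgBorn K π 𝓑) (z : ℤ) {P : Submodule V A}
    (hP : 𝓑.IsBounded (P : Set A)) :
    𝓑.IsBounded ((P.map (kSmul (V := V) K ((algebraMap V K π) ^ z)) : Submodule V A) : Set A) := by
  rcases le_or_gt 0 z with hz | hz
  · refine 𝓑.isBounded_subset hP ?_
    rintro _ ⟨x, hx, rfl⟩
    show kSmul (V := V) K ((algebraMap V K π) ^ z) x ∈ P
    have hzz : (algebraMap V K π) ^ z = (algebraMap V K π) ^ z.toNat := by
      rw [← zpow_natCast, Int.toNat_of_nonneg hz]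
    rw [kSmul_apply, hzz]
    exact smul_pow_mem π z.toNat P hx
  · have hz' : (algebraMap V K π) ^ z = ((algebraMap V K π))⁻¹ ^ (-z).toNat := by
      rw [inv_pow, ← zpow_natCast, Int.toNat_of_nonneg (by omega : (0:ℤ) ≤ -z), zpow_neg,
        inv_inv]
    rw [hz', Submodule.map_coe]
    exact bounded_image_inv_pow h _ hP

lemma bounded_geomSum_hard (π : V) (hπ : algebraMap V K π ≠ 0) (ε : ℝ)
    (hε0 : 0 < ε) (hε1 : ε < 1) {s : ℝ} (hs : 0 < s) (j : ℤ) {c : ℕ} (hc : 1 ≤ c)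
    (h𝓑 : IsKAlgBorn K π 𝓑) {M : Submodule V A} (hM : 𝓑.IsBounded (M : Set A))
    (hb : 𝓑.IsBounded ((geomSumK K π ε (ε ^ j * s ^ c)
        ((M ^ c).map (kSmul (V := V) K ((algebraMap V K π) ^ j))) : Submodule V A) : Set A)) :
    𝓑.IsBounded ((geomSumK K π ε s M : Submodule V A) : Set A) := by
  set ts : ℝ := Real.log s / Real.log ε with hts
  set C : ℕ := ⌈(c:ℝ) * |ts|⌉₊ + 1 with hC
  set G := geomSumK K π ε (ε ^ j * s ^ c)
      ((M ^ c).map (kSmul (V := V) K ((algebraMap V K π) ^ j))) with hGdef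
  set T := (M ⊔ 1 : Submodule V A) ^ (c-1) with hTdef
  set b : ℕ → ℤ := fun m => cexp ε (s ^ (-(m:ℤ))) with hbdef
  have hbceil : ∀ m : ℕ, b m = ⌈(↑(-(m:ℤ)) : ℝ) * ts⌉ := by
    intro m
    simp only [hbdef]
    rw [cexp_zpow, ← hts]
  have hbound : ∀ m : ℕ, b (c*(m/c)) ≤ b m + C := by
    intro m
    have h1 : (b (c*(m/c)) : ℝ) < (↑(-((c*(m/c) : ℕ):ℤ)) : ℝ) * ts + 1 := by
      rw [hbceil]; exact Int.ceil_lt_add_one _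
    have h2 : (↑(-(m:ℤ)) : ℝ) * ts ≤ (b m : ℝ) := by
      rw [hbceil]; exact Int.le_ceil _
    have hnat : (↑(c*(m/c)) : ℝ) + ((m % c : ℕ) : ℝ) = (m:ℝ) := by
      exact_mod_cast congrArg (Nat.cast : ℕ → ℝ) (Nat.div_add_mod m c)
    have h3 : (↑(-((c*(m/c) : ℕ):ℤ)) : ℝ) * ts
        = (↑(-(m:ℤ)) : ℝ) * ts + ((m % c : ℕ) : ℝ) * ts := by
      simp only [Int.cast_neg, Int.cast_natCast]
      rw [← hnat]
      ring
    have h4 : ((m % c : ℕ):ℝ) * ts ≤ (c:ℝ) * |ts| := by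
      calc ((m % c : ℕ):ℝ) * ts ≤ ((m % c : ℕ):ℝ) * |ts| :=
            mul_le_mul_of_nonneg_left (le_abs_self ts) (by positivity)
        _ ≤ (c:ℝ) * |ts| := by
            have hmc : (m % c : ℕ) ≤ c := (Nat.mod_lt m (by omega)).le
            exact mul_le_mul_of_nonneg_right (by exact_mod_cast hmc) (abs_nonneg ts)
    have h5 : ((c:ℝ) * |ts|) + 1 ≤ (C:ℝ) := by
      have hle := Nat.le_ceil ((c:ℝ) * |ts|)
      rw [hC]
      push_cast
      linarith
    have hfin : (b (c*(m/c)) : ℝ) < (b m : ℝ) + (C : ℝ) := by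
      rw [h3] at h1
      linarith
    exact_mod_cast hfin.le
  have honele : ∀ n : ℕ, (1 : Submodule V A) ≤ (M ⊔ 1) ^ n := by
    intro n
    induction n with
    | zero => exact le_of_eq (pow_zero _).symm
    | succ n ih =>
      rw [pow_succ]
      calc (1 : Submodule V A) = 1 * 1 := (mul_one 1).symm
        _ ≤ (M ⊔ 1) ^ n * (M ⊔ 1) := mul_le_mul' ih le_sup_right
  have hpowmono : ∀ n : ℕ, M ^ n ≤ (M ⊔ 1) ^ n := by
    intro n
    induction n with
    | zero => exact le_of_eq (by rw [pow_zero, pow_zero])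
    | succ n ih =>
      rw [pow_succ, pow_succ]
      exact mul_le_mul' ih le_sup_left
  have hMT : ∀ t : ℕ, t < c → M ^ t ≤ T := by
    intro t ht
    calc M ^ t ≤ (M ⊔ 1) ^ t := hpowmono t
      _ = (M ⊔ 1) ^ t * 1 := (mul_one _).symm
      _ ≤ (M ⊔ 1) ^ t * (M ⊔ 1) ^ (c-1-t) := mul_le_mul' le_rfl (honele _)
      _ = T := by rw [hTdef, ← pow_add]; congr 1; omega
  have hsubG : ∀ q : ℕ,
      (M ^ (c*q)).map (kSmul (V := V) K ((algebraMap V K π) ^ (b (c*q)))) ≤ G := by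
    intro q
    have hte := term_eq π hπ ε hε0 hε1 hs j c M q
    have hstar : (M ^ (c*q)).map (kSmul (V := V) K ((algebraMap V K π) ^ (b (c*q))))
        = starK K π ε (s ^ (-((c*q : ℕ):ℤ))) (M ^ (c*q)) := by
      simp only [hbdef, starK]
    rw [hstar, ← hte, hGdef]
    unfold geomSumK
    exact le_iSup (fun n : ℕ => starK K π ε ((ε ^ j * s ^ c) ^ (-(n:ℤ)))
      (((M ^ c).map (kSmul (V := V) K ((algebraMap V K π) ^ j))) ^ n)) q
  have hchain : geomSumK K π ε s M
      ≤ (G * T).map (kSmul (V := V) K ((algebraMap V K π) ^ (-(C:ℤ)))) := by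
    unfold geomSumK
    refine iSup_le fun m => ?_
    have step1 : starK K π ε (s ^ (-(m:ℤ))) (M ^ m)
        = (M ^ m).map (kSmul (V := V) K ((algebraMap V K π) ^ (b m))) := by
      simp only [hbdef, starK]
    have step2 : (M ^ m).map (kSmul (V := V) K ((algebraMap V K π) ^ (b m)))
        ≤ (M ^ m).map (kSmul (V := V) K ((algebraMap V K π) ^ (b (c*(m/c)) - C))) :=
      map_zpow_le π hπ _ (by have := hbound m; omega)
    have h1K : (M ^ (m % c)).map (kSmul (V := V) K (1:K)) = M ^ (m % c) := by
      rw [kSmul_one, Submodule.map_id]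
    have hm : c*(m/c) + m % c = m := Nat.div_add_mod m c
    have step3 : (M ^ m).map (kSmul (V := V) K ((algebraMap V K π) ^ (b (c*(m/c)) - C)))
        = (((M ^ (c*(m/c))).map (kSmul (V := V) K ((algebraMap V K π) ^ (b (c*(m/c))))))
            * (M ^ (m % c))).map (kSmul (V := V) K ((algebraMap V K π) ^ (-(C:ℤ)))) := by
      rw [← h1K, map_kSmul_mul, mul_one, map_map_kSmul, ← zpow_add₀ hπ, ← pow_add, hm,
        neg_add_eq_sub]
    calc starK K π ε (s ^ (-(m:ℤ))) (M ^ m)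
        = (M ^ m).map (kSmul (V := V) K ((algebraMap V K π) ^ (b m))) := step1
      _ ≤ (M ^ m).map (kSmul (V := V) K ((algebraMap V K π) ^ (b (c*(m/c)) - C))) := step2
      _ = (((M ^ (c*(m/c))).map (kSmul (V := V) K ((algebraMap V K π) ^ (b (c*(m/c))))))
            * (M ^ (m % c))).map (kSmul (V := V) K ((algebraMap V K π) ^ (-(C:ℤ)))) := step3
      _ ≤ (G * T).map (kSmul (V := V) K ((algebraMap V K π) ^ (-(C:ℤ)))) :=
          Submodule.map_mono (mul_le_mul' (hsubG _) (hMT _ (Nat.mod_lt m (by omega))))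
  have hTbdd : 𝓑.IsBounded (T : Set A) :=
    bounded_pow h𝓑.1 (bounded_submodule_sup hM bounded_one) _
  have hGT : 𝓑.IsBounded ((G * T : Submodule V A) : Set A) :=
    bounded_submodule_mul h𝓑.1 hb hTbdd
  have hfinal := bounded_map_zpow h𝓑 (-(C:ℤ)) hGT
  exact 𝓑.isBounded_subset hfinal (SetLike.coe_subset_coe.mpr hchain)

end Bounded

end SpecAux

open SpecAux in

/-- Let `R` be a bornological `K`-algebra, `M ⊆ R` a bounded `V`-submodule,
`j ∈ ℤ` and `c ∈ ℤ`, `c ≥ 1`.  Then `ρ(π^j M^c) = ε^j · ρ(M)^c`. -/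
theorem specRad_zpow_smul_pow
    {V : Type u} [CommRing V] [IsDomain V] [IsDiscreteValuationRing V]
    (π : V) (hπ : Irreducible π) (hV : IsAdicComplete (Ideal.span {π}) V)
    (K : Type u) [Field K] [Algebra V K] [IsFractionRing V K]
    (ε : ℝ) (hε0 : 0 < ε) (hε1 : ε < 1)
    {R : Type v} [Ring R] [Algebra K R] [Algebra V R] [IsScalarTower V K R]
    (𝓑 : ModBornology V R) (h𝓑 : IsKAlgBorn K π 𝓑)
    (M : Submodule V R) (hM : 𝓑.IsBounded (M : Set R))
    (j : ℤ) (c : ℕ) (hc : 1 ≤ c) :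
    specRad K π ε 𝓑 ((M ^ c).map (kSmul (V := V) K ((algebraMap V K π) ^ j)))
      = ENNReal.ofReal (ε ^ j) * (specRad K π ε 𝓑 M) ^ c := by
  have hπ0 : (algebraMap V K π) ≠ 0 := fun h =>
    hπ.ne_zero (IsFractionRing.injective V K (by simpa using h))
  have hεj : (0:ℝ) < ε ^ j := zpow_pos hε0 j
  set e : ENNReal := ENNReal.ofReal (ε ^ j) with he
  have he0 : e ≠ 0 := (ENNReal.ofReal_pos.mpr hεj).ne'
  have heT : e ≠ ⊤ := ENNReal.ofReal_ne_top
  set f : ENNReal → ENNReal := fun x => e * x ^ c with hf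
  have hmono : StrictMono f := fun x y hxy =>
    ENNReal.mul_lt_mul_right he0 heT (ENNReal.pow_lt_pow_left (by omega) hxy)
  have hcR : ((c:ℝ)) ≠ 0 := by
    have : c ≠ 0 := by omega
    exact_mod_cast this
  have hsurj : Function.Surjective f := by
    intro y
    refine ⟨(y / e) ^ ((c:ℝ)⁻¹), ?_⟩
    show e * ((y / e) ^ ((c:ℝ)⁻¹)) ^ c = y
    rw [← ENNReal.rpow_natCast ((y / e) ^ ((c:ℝ)⁻¹)) c, ← ENNReal.rpow_mul,
      inv_mul_cancel₀ hcR, ENNReal.rpow_one, ENNReal.mul_div_cancel he0 heT]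
  set S2 : Set ENNReal := {ρ : ENNReal | ∃ r : ℝ, 0 < r ∧ ρ = ENNReal.ofReal r ∧
    𝓑.IsBounded (geomSumK K π ε r M : Set R)} with hS2
  have hsets : {ρ : ENNReal | ∃ r : ℝ, 0 < r ∧ ρ = ENNReal.ofReal r ∧
      𝓑.IsBounded ((geomSumK K π ε r
        ((M ^ c).map (kSmul (V := V) K ((algebraMap V K π) ^ j)))) : Set R)}
      = f '' S2 := by
    ext ρ
    constructor
    · rintro ⟨r, hr, rfl, hbdd⟩
      set s : ℝ := (r / ε ^ j) ^ ((c:ℝ)⁻¹) with hsdef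
      have hs0 : 0 < s := Real.rpow_pos_of_pos (by positivity) _
      have hsc : ε ^ j * s ^ c = r := by
        rw [hsdef, ← Real.rpow_natCast ((r / ε ^ j) ^ ((c:ℝ)⁻¹)) c,
          ← Real.rpow_mul (by positivity), inv_mul_cancel₀ hcR, Real.rpow_one]
        field_simp
      refine ⟨ENNReal.ofReal s, ⟨s, hs0, rfl, ?_⟩, ?_⟩
      · refine SpecAux.bounded_geomSum_hard π hπ0 ε hε0 hε1 hs0 j hc h𝓑 hM ?_
        rw [hsc]
        exact hbdd
      · show e * (ENNReal.ofReal s) ^ c = ENNReal.ofReal r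
        rw [he, ← ENNReal.ofReal_pow hs0.le, ← ENNReal.ofReal_mul (le_of_lt hεj), hsc]
    · rintro ⟨_, ⟨s, hs0, rfl, hbdd⟩, rfl⟩
      refine ⟨ε ^ j * s ^ c, by positivity, ?_, ?_⟩
      · show e * (ENNReal.ofReal s) ^ c = ENNReal.ofReal (ε ^ j * s ^ c)
        rw [he, ← ENNReal.ofReal_pow hs0.le, ← ENNReal.ofReal_mul (le_of_lt hεj)]
      · refine 𝓑.isBounded_subset hbdd ?_
        exact SetLike.coe_subset_coe.mpr (SpecAux.geomSum_le π hπ0 ε hε0 hε1 hs0 j c M)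
  have himg : sInf (f '' S2) = f (sInf S2) := by
    rw [sInf_image]
    exact ((StrictMono.orderIsoOfSurjective f hmono hsurj).map_sInf S2).symm
  show sInf _ = _
  rw [specRad, hsets, himg, hf]
end

section
/- Let (R, 𝓑) be a bornological V-algebra. The following are equivalent: (1) ρ(M) ≤ 1 for every bounded V-submodule M ∈ 𝓑; (2) Σ_{j≥0} π^j M^{cj+d} is bounded for every bounded V-submodule M ∈ 𝓑 and all c, d ∈ ℕ; (3) Σ_{j≥0} π^j M^{j+1} is bounded for every bounded V-submodule M ∈ 𝓑; (4) every bounded subset of R is contained in a bounded V-submodule M with π·M² ⊆ M. -/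
open Pointwise

universe u v w

open Born


section Aux

variable {V : Type u} [CommRing V] {R : Type v} [Ring R] [Algebra V R]
variable {𝓑 : ModBornology V R}

theorem aux_bdd_mul (h𝓑 : IsAlgBorn 𝓑) {M N : Submodule V R}
    (hM : 𝓑.IsBounded (M : Set R)) (hN : 𝓑.IsBounded (N : Set R)) :
    𝓑.IsBounded ((M * N : Submodule V R) : Set R) := by
  rw [Submodule.mul_eq_span_mul_set]
  exact 𝓑.isBounded_span (h𝓑 hM hN)

theorem aux_bdd_pow (h𝓑 : IsAlgBorn 𝓑) {M : Submodule V R}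
    (hM : 𝓑.IsBounded (M : Set R)) (n : ℕ) :
    𝓑.IsBounded ((M ^ n : Submodule V R) : Set R) := by
  induction n with
  | zero =>
    rw [pow_zero, Submodule.one_eq_span]
    exact 𝓑.isBounded_span (𝓑.isBounded_of_finite (Set.finite_singleton 1))
  | succ n ih =>
    rw [pow_succ]
    exact aux_bdd_mul h𝓑 ih hM

theorem aux_bdd_sup {A B : Submodule V R} (hA : 𝓑.IsBounded (A : Set R))
    (hB : 𝓑.IsBounded (B : Set R)) : 𝓑.IsBounded ((A ⊔ B : Submodule V R) : Set R) := by
  have h : (A ⊔ B : Submodule V R) = Submodule.span V ((A : Set R) ∪ (B : Set R)) := by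
    rw [Submodule.span_union, Submodule.span_eq, Submodule.span_eq]
  rw [h]
  exact 𝓑.isBounded_span (𝓑.isBounded_union hA hB)

theorem aux_smul_iSup {ι : Sort*} (a : V) (p : ι → Submodule V R) :
    (a • ⨆ i, p i : Submodule V R) = ⨆ i, a • p i :=
  Submodule.map_iSup (DistribMulAction.toLinearMap V R a) p

theorem aux_pow_le_pow {A B : Submodule V R} (h : A ≤ B) (n : ℕ) : A ^ n ≤ B ^ n := by
  induction n with
  | zero => simp
  | succ n ih => rw [pow_succ, pow_succ]; exact mul_le_mul' ih h

end Aux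

/-- For a bornological `V`-algebra `(R, 𝓑)` the following are equivalent:
(1) `ρ(M) ≤ 1` for all bounded `V`-submodules `M`;
(2) `Σ_{j≥0} π^j M^{cj+d}` is bounded for all bounded `V`-submodules `M` and all `c, d ∈ ℕ`;
(3) `Σ_{j≥0} π^j M^{j+1}` is bounded for all bounded `V`-submodules `M`;
(4) every bounded subset of `R` is contained in a bounded `V`-submodule `M` with
`π·M² ⊆ M`. -/
theorem specLeOne_tfae
    {V : Type u} [CommRing V] [IsDomain V] [IsDiscreteValuationRing V]
    (π : V) (hπ : Irreducible π) (hV : IsAdicComplete (Ideal.span {π}) V)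
    (ε : ℝ) (hε0 : 0 < ε) (hε1 : ε < 1)
    {R : Type v} [Ring R] [Algebra V R]
    (𝓑 : ModBornology V R) (h𝓑 : IsAlgBorn 𝓑) :
    [ (∀ M : Submodule V R, 𝓑.IsBounded (M : Set R) → SpecLeOne π ε 𝓑 M),
      (∀ M : Submodule V R, 𝓑.IsBounded (M : Set R) → ∀ c d : ℕ,
        𝓑.IsBounded ((⨆ j : ℕ, π ^ j • M ^ (c * j + d) : Submodule V R) : Set R)),
      (∀ M : Submodule V R, 𝓑.IsBounded (M : Set R) →
        𝓑.IsBounded ((⨆ j : ℕ, π ^ j • M ^ (j + 1) : Submodule V R) : Set R)),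
      (∀ S : Set R, 𝓑.IsBounded S → ∃ M : Submodule V R,
        𝓑.IsBounded (M : Set R) ∧ S ⊆ (M : Set R) ∧ π • (M * M) ≤ M) ].TFAE := by

  have hεlog : Real.log ε < 0 := Real.log_neg hε0 hε1
  have hεlogne : Real.log ε ≠ 0 := ne_of_lt hεlog
  tfae_have 1 → 2
  | h1 => by
    intro M hM c d
    set m : ℕ := c + d + 1 with hm
    have hmpos : (0:ℝ) < (m:ℝ) := by positivity
    set r : ℝ := ε ^ (-(m:ℝ)⁻¹) with hr
    have hr1 : 1 < r := by
      rw [hr]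
      refine (Real.one_lt_rpow_iff_of_pos hε0).mpr (Or.inr ⟨hε1, ?_⟩)
      have : (0:ℝ) < (m:ℝ)⁻¹ := by positivity
      linarith
    have hcexp : ∀ n : ℕ, cexp ε (r ^ (-(n:ℤ))) = ⌈(n:ℝ) / (m:ℝ)⌉ := by
      intro n
      unfold Born.cexp
      congr 1
      rw [Real.log_zpow, hr, Real.log_rpow hε0]
      push_cast
      field_simp
    have hgeom := h1 M hM r hr1
    have hle : (⨆ j : ℕ, π ^ j • M ^ (c * j + d) : Submodule V R) ≤
        (M ^ d : Submodule V R) ⊔ geomSumV π ε r M := by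
      refine iSup_le fun j => ?_
      match j with
      | 0 =>
        refine le_trans ?_ le_sup_left
        simp
      | Nat.succ j =>
        refine le_trans ?_ (le_sup_right (a := (M ^ d : Submodule V R)))
        set n : ℕ := c * (j + 1) + d with hn
        have hk : (cexp ε (r ^ (-(n:ℤ)))).toNat ≤ j + 1 := by
          rw [hcexp n]
          have h1 : (⌈(n:ℝ) / (m:ℝ)⌉ : ℤ) ≤ ((j + 1 : ℕ) : ℤ) := by
            refine Int.ceil_le.mpr ?_
            rw [div_le_iff₀ hmpos]
            push_cast [hn, hm]
            nlinarith [Nat.cast_nonneg (α := ℝ) j, Nat.cast_nonneg (α := ℝ) c,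
              Nat.cast_nonneg (α := ℝ) d]
          calc (⌈(n:ℝ) / (m:ℝ)⌉).toNat ≤ (((j + 1 : ℕ) : ℤ)).toNat := Int.toNat_le_toNat h1
            _ = j + 1 := Int.toNat_natCast _
        have hterm : π ^ (j + 1) • M ^ n ≤ starV π ε (r ^ (-(n:ℤ))) (M ^ n) := by
          unfold Born.starV
          set k := (cexp ε (r ^ (-(n:ℤ)))).toNat with hkdef
          have hsplit : π ^ (j + 1) = π ^ k * π ^ (j + 1 - k) := by
            rw [← pow_add, Nat.add_sub_cancel' hk]
          rw [hsplit, mul_smul]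
          exact smul_mono_right _ (Submodule.smul_le_self_of_tower _ _)
        exact le_trans hterm (le_iSup (fun n : ℕ => starV π ε (r ^ (-(n:ℤ))) (M ^ n)) n)
    exact 𝓑.isBounded_subset (aux_bdd_sup (aux_bdd_pow h𝓑 hM d) hgeom) hle
  tfae_have 2 → 3
  | h2 => by
    intro M hM
    simpa using h2 M hM 1 1
  tfae_have 3 → 4
  | h3 => by
    intro S hS
    set M₀ : Submodule V R := Submodule.span V (S ∪ {1}) with hM₀
    have hM₀b : 𝓑.IsBounded (M₀ : Set R) :=
      𝓑.isBounded_span (𝓑.isBounded_union hS (𝓑.isBounded_of_finite (Set.finite_singleton 1)))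
    refine ⟨⨆ j : ℕ, π ^ j • M₀ ^ (j + 1), h3 M₀ hM₀b, ?_, ?_⟩
    · intro x hx
      have hxM₀ : x ∈ M₀ := Submodule.subset_span (Or.inl hx)
      have h0 : M₀ ≤ ⨆ j : ℕ, π ^ j • M₀ ^ (j + 1) := by
        have h := le_iSup (fun j : ℕ => π ^ j • M₀ ^ (j + 1) : ℕ → Submodule V R) 0
        simpa using h
      exact h0 hxM₀
    · set N : Submodule V R := ⨆ j : ℕ, π ^ j • M₀ ^ (j + 1) with hN
      have hNN : N * N ≤ ⨆ k : ℕ, π ^ k • M₀ ^ (k + 2) := by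
        rw [hN, Submodule.iSup_mul]
        refine iSup_le fun i => ?_
        rw [Submodule.mul_iSup]
        refine iSup_le fun j => ?_
        have heq : (π ^ i • M₀ ^ (i + 1)) * (π ^ j • M₀ ^ (j + 1)) =
            π ^ (i + j) • M₀ ^ ((i + j) + 2) := by
          rw [smul_mul_assoc, mul_smul_comm, ← mul_smul, ← pow_add, ← pow_add,
            show (i + 1) + (j + 1) = (i + j) + 2 by omega]
        rw [heq]
        exact le_iSup (fun k : ℕ => π ^ k • M₀ ^ (k + 2) : ℕ → Submodule V R) (i + j)
      calc π • (N * N) ≤ π • ⨆ k : ℕ, π ^ k • M₀ ^ (k + 2) := smul_mono_right _ hNN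
        _ ≤ N := by
            rw [aux_smul_iSup]
            refine iSup_le fun k => ?_
            rw [← mul_smul, ← pow_succ']
            have h := le_iSup (fun j : ℕ => π ^ j • M₀ ^ (j + 1) : ℕ → Submodule V R) (k + 1)
            rw [hN]
            simpa [show k + 1 + 1 = k + 2 by omega] using h
  tfae_have 4 → 1
  | h4 => by
    intro M hM r hr1
    have hlogr : 0 < Real.log r := Real.log_pos hr1
    set t : ℝ := -(Real.log r / Real.log ε) with ht
    have ht0 : 0 < t := by
      have hneg : Real.log r / Real.log ε < 0 := div_neg_of_pos_of_neg hlogr hεlog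
      rw [ht]; linarith
    set m : ℕ := ⌈t⁻¹⌉₊ + 1 with hm
    have hm1 : 1 ≤ m := by omega
    have hmt : 1 ≤ (m:ℝ) * t := by
      have h1 : t⁻¹ ≤ (m:ℝ) := by
        refine le_trans (Nat.le_ceil t⁻¹) ?_
        rw [hm]; push_cast; linarith
      calc (1:ℝ) = t⁻¹ * t := (inv_mul_cancel₀ (ne_of_gt ht0)).symm
        _ ≤ (m:ℝ) * t := mul_le_mul_of_nonneg_right h1 (le_of_lt ht0)
    have hSb : ∀ k : ℕ,
        𝓑.IsBounded (((Finset.range k).sup (fun i => M ^ i) : Submodule V R) : Set R) := by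
      intro k
      induction k with
      | zero =>
        rw [Finset.range_zero, Finset.sup_empty]
        exact 𝓑.isBounded_of_finite (by simp [Submodule.bot_coe])
      | succ k ih =>
        rw [Finset.range_add_one, Finset.sup_insert]
        exact aux_bdd_sup (aux_bdd_pow h𝓑 hM k) ih
    obtain ⟨N, hNb, hSN, hNmul⟩ := h4 _ (hSb (m + 1))
    have hSN' : ((Finset.range (m + 1)).sup (fun i => M ^ i) : Submodule V R) ≤ N :=
      fun x hx => hSN hx
    have hpow_le : ∀ i, i ≤ m → M ^ i ≤ N := fun i hi =>
      le_trans (Finset.le_sup (f := fun i => (M ^ i : Submodule V R))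
        (Finset.mem_range.mpr (Nat.lt_succ_of_le hi))) hSN'
    have hA : ∀ q : ℕ, π ^ q • N ^ (q + 1) ≤ N := by
      intro q
      induction q with
      | zero => simpa using le_refl N
      | succ q ih =>
        have heq : π ^ (q + 1) • N ^ (q + 2) = π • ((π ^ q • N ^ (q + 1)) * N) := by
          rw [smul_mul_assoc, ← pow_succ, ← mul_smul, ← pow_succ']
        calc π ^ (q + 1) • N ^ (q + 1 + 1) = π • ((π ^ q • N ^ (q + 1)) * N) := by
              rw [show q + 1 + 1 = q + 2 by omega, heq]
          _ ≤ π • (N * N) := smul_mono_right _ (mul_le_mul' ih le_rfl)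
          _ ≤ N := hNmul
    have hB : ∀ n : ℕ, M ^ n ≤ N ^ (n / m + 1) := by
      intro n
      have hmod : M ^ (n % m) ≤ N := hpow_le _ (le_of_lt (Nat.mod_lt n (by omega)))
      calc M ^ n = (M ^ m) ^ (n / m) * M ^ (n % m) := by
            rw [← pow_mul, ← pow_add, Nat.div_add_mod n m]
        _ ≤ N ^ (n / m) * N := mul_le_mul' (aux_pow_le_pow (hpow_le m le_rfl) _) hmod
        _ = N ^ (n / m + 1) := (pow_succ N _).symm
    have hfinal : geomSumV π ε r M ≤ N := by
      refine iSup_le fun n => ?_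
      unfold Born.starV
      set k := (cexp ε (r ^ (-(n:ℤ)))).toNat with hkdef
      set q := n / m with hq
      have hceil : cexp ε (r ^ (-(n:ℤ))) = ⌈(n:ℝ) * t⌉ := by
        unfold Born.cexp
        congr 1
        rw [Real.log_zpow, ht]
        push_cast
        field_simp
      have hqk : q ≤ k := by
        have h1 : ((q * m : ℕ) : ℝ) ≤ (n : ℝ) := by
          exact_mod_cast Nat.div_mul_le_self n m
        have h2 : (q:ℝ) ≤ (n:ℝ) * t := by
          rw [Nat.cast_mul] at h1
          nlinarith [mul_le_mul_of_nonneg_right h1 ht0.le,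
            mul_le_mul_of_nonneg_left hmt (Nat.cast_nonneg (α := ℝ) q)]
        have h3 : ((q:ℕ):ℤ) ≤ ⌈(n:ℝ) * t⌉ := by
          have := Int.le_ceil ((n:ℝ) * t)
          exact_mod_cast le_trans h2 this
        calc q = (((q:ℕ):ℤ)).toNat := (Int.toNat_natCast q).symm
          _ ≤ k := by rw [hkdef, hceil]; exact Int.toNat_le_toNat h3
      calc π ^ k • M ^ n = π ^ q • (π ^ (k - q) • M ^ n) := by
            rw [← mul_smul, ← pow_add, Nat.add_sub_cancel' hqk]
        _ ≤ π ^ q • M ^ n := smul_mono_right _ (Submodule.smul_le_self_of_tower _ _)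
        _ ≤ π ^ q • N ^ (q + 1) := smul_mono_right _ (hB n)
        _ ≤ N := hA q
    exact 𝓑.isBounded_subset hNb (fun x hx => hfinal hx)
  tfae_finish
end

section
/- If R is a complete bornological V-algebra and M ⊆ R a bounded V-submodule with ρ(M) < ε^{−1}, then 1 − πz is invertible in R for every z ∈ M. If R is a complete bornological K-algebra and M ⊆ R a bounded V-submodule with ρ(M) < 1, then 1 − z is invertible in R for every z ∈ M. -/
open Pointwise

universe u v w

open Born

section Aux

variable {V : Type u} [CommRing V] {R : Type v} [Ring R] [Algebra V R]

lemma aux_smul_mono {a b : V} (h : a ∣ b) (N : Submodule V R) : b • N ≤ a • N := by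
  obtain ⟨c, rfl⟩ := h
  intro x hx
  rw [← SetLike.mem_coe, Submodule.coe_pointwise_smul, Set.mem_smul_set] at hx ⊢
  obtain ⟨s, hs, rfl⟩ := hx
  exact ⟨c • s, N.smul_mem c hs, by rw [mul_smul]⟩

lemma key_neumann (π : V) (𝓑 : ModBornology V R) (h𝓑 : IsAlgBorn 𝓑)
    (h𝓑c : BornComplete π 𝓑)
    (N : Submodule V R) (hN : 𝓑.IsBounded (N : Set R))
    (w : R) (φ : ℕ → ℕ) (hmono : Monotone φ) (hub : ∀ m : ℕ, ∃ k, m ≤ φ k)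
    (hw : ∀ k : ℕ, w ^ k ∈ (π ^ φ k : V) • N) :
    IsUnit (1 - w) := by
  set x : ℕ → R := fun n => ∑ i ∈ Finset.range (n + 1), w ^ i with hxdef
  have hδ : TendstoPiAdic π (fun l => π ^ φ l) := by
    intro m
    obtain ⟨k, hk⟩ := hub m
    exact ⟨k, fun n hn => pow_dvd_pow π (hk.trans (hmono hn))⟩
  have hmem0 : ∀ l n m : ℕ, l ≤ n → l ≤ m → m ≤ n →
      x n - x m ∈ ((π ^ φ l : V) • N : Submodule V R) := by
    intro l n m _ hlm hmn
    have hx : x n - x m = ∑ k ∈ Finset.Ico (m + 1) (n + 1), w ^ k := by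
      rw [Finset.sum_Ico_eq_sub _ (by omega)]
    rw [hx]
    refine Submodule.sum_mem _ fun k hk => ?_
    have hk' : l ≤ k := by simp only [Finset.mem_Ico] at hk; omega
    exact aux_smul_mono (pow_dvd_pow π (hmono hk')) N (hw k)
  have hmem : ∀ l n m : ℕ, l ≤ n → l ≤ m →
      x n - x m ∈ ((π ^ φ l : V) • N : Submodule V R) := by
    intro l n m hn hm
    rcases le_total m n with h | h
    · exact hmem0 l n m hn hm h
    · have := Submodule.neg_mem _ (hmem0 l m n hm hn h)
      simpa using this
  have hcauchy : SCauchy π (N : Set R) x := by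
    refine ⟨fun l => π ^ φ l, hδ, fun l n m hn hm => ?_⟩
    have := hmem l n m hn hm
    rwa [← SetLike.mem_coe, Submodule.coe_pointwise_smul] at this
  obtain ⟨hsep, hcomp⟩ := h𝓑c
  obtain ⟨S', hS', hconv⟩ := hcomp (N : Set R) hN
  obtain ⟨L, δ', hδ', hL⟩ := hconv x hcauchy
  have hgeo : ∀ n : ℕ, (1 - w) * x n = 1 - w ^ (n + 1) := by
    intro n
    have h := mul_geom_sum w (n + 1)
    have h2 : -((w - 1) * x n) = -(w ^ (n + 1) - 1) := by rw [hxdef]; rw [h]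
    have h3 : (1 - w) * x n = -((w - 1) * x n) := by rw [← neg_mul, neg_sub]
    rw [h3, h2, neg_sub]
  have hgeo' : ∀ n : ℕ, x n * (1 - w) = 1 - w ^ (n + 1) := by
    intro n
    have h := geom_sum_mul w (n + 1)
    have h2 : -(x n * (w - 1)) = -(w ^ (n + 1) - 1) := by rw [hxdef]; rw [h]
    have h3 : x n * (1 - w) = -(x n * (w - 1)) := by rw [← mul_neg, neg_sub]
    rw [h3, h2, neg_sub]
  -- convergence of `1 - w ^ (n+1)` to `1`
  have hconv1 : ∀ y : ℕ → R, (∀ n, y n = 1 - w ^ (n + 1)) → ConvTo π 𝓑 y 1 := by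
    intro y hy
    refine ⟨(N : Set R), hN, fun l => π ^ φ l, hδ, fun n => ?_⟩
    have h1 : w ^ (n + 1) ∈ ((π ^ φ n : V) • N : Submodule V R) :=
      aux_smul_mono (pow_dvd_pow π (hmono (Nat.le_succ n))) N (hw (n + 1))
    have h2 : y n - 1 ∈ ((π ^ φ n : V) • N : Submodule V R) := by
      rw [hy n]
      simpa using Submodule.neg_mem _ h1
    rwa [← SetLike.mem_coe, Submodule.coe_pointwise_smul] at h2
  have h1 : (1 - w) * L = 1 := by
    refine hsep (fun n => (1 - w) * x n) _ _ ?_ (hconv1 _ hgeo)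
    refine ⟨{1 - w} * S', h𝓑 (𝓑.isBounded_of_finite (Set.finite_singleton _)) hS',
      δ', hδ', fun n => ?_⟩
    obtain ⟨y, hy, hyx⟩ := Set.mem_smul_set.mp (hL n)
    refine Set.mem_smul_set.mpr ⟨(1 - w) * y, Set.mul_mem_mul rfl hy, ?_⟩
    rw [← mul_smul_comm, hyx, mul_sub]
  have h2 : L * (1 - w) = 1 := by
    refine hsep (fun n => x n * (1 - w)) _ _ ?_ (hconv1 _ hgeo')
    refine ⟨S' * {1 - w}, h𝓑 hS' (𝓑.isBounded_of_finite (Set.finite_singleton _)),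
      δ', hδ', fun n => ?_⟩
    obtain ⟨y, hy, hyx⟩ := Set.mem_smul_set.mp (hL n)
    refine Set.mem_smul_set.mpr ⟨y * (1 - w), Set.mul_mem_mul hy rfl, ?_⟩
    rw [← smul_mul_assoc, hyx, sub_mul]
  exact ⟨⟨1 - w, L, h1, h2⟩, rfl⟩

end Aux


/-- **Statement 6.** If `R` is a complete bornological `V`-algebra and `M ⊆ R` a bounded
`V`-submodule with `ρ(M) < ε⁻¹`, then `1 − πz` is invertible in `R` for every `z ∈ M`.
If `A` is a complete bornological `K`-algebra and `M' ⊆ A` a bounded `V`-submodule with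
`ρ(M') < 1`, then `1 − z` is invertible in `A` for every `z ∈ M'`. -/
theorem neumann_series_invertibility
    {V : Type u} [CommRing V] [IsDomain V] [IsDiscreteValuationRing V]
    (π : V) (hπ : Irreducible π) (hV : IsAdicComplete (Ideal.span {π}) V)
    (K : Type u) [Field K] [Algebra V K] [IsFractionRing V K]
    (ε : ℝ) (hε0 : 0 < ε) (hε1 : ε < 1)
    -- the complete bornological `V`-algebra `R`
    {R : Type v} [Ring R] [Algebra V R]
    (𝓑 : ModBornology V R) (h𝓑 : IsAlgBorn 𝓑) (h𝓑c : BornComplete π 𝓑)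
    (M : Submodule V R) (hM : 𝓑.IsBounded (M : Set R))
    (hρ : ∃ r : ℝ, 1 ≤ r ∧ r < ε⁻¹ ∧ 𝓑.IsBounded (geomSumV π ε r M : Set R))
    -- the complete bornological `K`-algebra `A`
    {A : Type v} [Ring A] [Algebra K A] [Algebra V A] [IsScalarTower V K A]
    (𝓒 : ModBornology V A) (h𝓒 : IsKAlgBorn K π 𝓒) (h𝓒c : BornComplete π 𝓒)
    (M' : Submodule V A) (hM' : 𝓒.IsBounded (M' : Set A))
    (hρ' : specRad K π ε 𝓒 M' < 1) :
    (∀ z ∈ M, IsUnit (1 - algebraMap V R π * z)) ∧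
    (∀ z ∈ M', IsUnit (1 - z)) := by
  have hεlog : Real.log ε < 0 := Real.log_neg hε0 hε1
  constructor
  · -- V-algebra case
    intro z hz
    obtain ⟨r, hr1, hrε, hbd⟩ := hρ
    set c : ℝ := Real.log r / (-Real.log ε) with hc
    have hc0 : 0 ≤ c := div_nonneg (Real.log_nonneg hr1) (by linarith)
    have hc1 : c < 1 := by
      rw [hc, div_lt_one (by linarith)]
      calc Real.log r < Real.log ε⁻¹ := Real.log_lt_log (by linarith) hrε
        _ = -Real.log ε := Real.log_inv ε
    set E : ℕ → ℤ := fun k => ⌈(k : ℝ) * c⌉ with hE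
    have hcexp : ∀ k : ℕ, cexp ε (r ^ (-(k : ℤ))) = E k := by
      intro k
      simp only [hE]
      unfold cexp
      congr 1
      rw [Real.log_zpow, hc]
      push_cast
      rw [neg_mul, neg_div, div_neg, mul_neg, mul_div_assoc]
    have hE0 : ∀ k, 0 ≤ E k := by
      intro k
      simp only [hE]
      exact Int.ceil_nonneg (mul_nonneg (Nat.cast_nonneg k) hc0)
    have hEk : ∀ k : ℕ, E k ≤ (k : ℤ) := by
      intro k
      simp only [hE]
      refine Int.ceil_le.mpr ?_
      push_cast
      nlinarith [Nat.cast_nonneg (α := ℝ) k]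
    have hEsucc : ∀ k : ℕ, E (k + 1) ≤ E k + 1 := by
      intro k
      simp only [hE]
      have h1 : ((k : ℝ) + 1) * c ≤ (k : ℝ) * c + 1 := by nlinarith
      calc ⌈((k + 1 : ℕ) : ℝ) * c⌉ ≤ ⌈(k : ℝ) * c + 1⌉ :=
            Int.ceil_le_ceil (by push_cast; linarith)
        _ = ⌈(k : ℝ) * c⌉ + 1 := by rw [Int.ceil_add_one]
    set φ : ℕ → ℕ := fun k => k - (cexp ε (r ^ (-(k : ℤ)))).toNat with hφ
    have hφE : ∀ k, φ k = k - (E k).toNat := by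
      intro k
      simp only [hφ, hcexp k]
    have hmono : Monotone φ := by
      refine monotone_nat_of_le_succ fun k => ?_
      rw [hφE, hφE]
      have h1 := hE0 k; have h2 := hE0 (k + 1); have h3 := hEk k
      have h4 := hEsucc k
      omega
    have hub : ∀ m : ℕ, ∃ k, m ≤ φ k := by
      intro m
      obtain ⟨k, hk⟩ := exists_nat_ge ((m : ℝ) / (1 - c))
      refine ⟨k, ?_⟩
      have hk' : (m : ℝ) ≤ (k : ℝ) * (1 - c) := by
        rw [div_le_iff₀ (by linarith)] at hk; linarith
      have hEkm : E k ≤ (k : ℤ) - (m : ℤ) := by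
        simp only [hE]
        refine Int.ceil_le.mpr ?_
        push_cast
        linarith
      rw [hφE]
      have h1 := hE0 k
      omega
    have hw : ∀ k : ℕ, (algebraMap V R π * z) ^ k ∈
        (π ^ φ k : V) • geomSumV π ε r M := by
      intro k
      have hcomm : Commute (algebraMap V R π) z := Algebra.commutes π z
      have h1 : (algebraMap V R π * z) ^ k = (π ^ k : V) • z ^ k := by
        rw [hcomm.mul_pow, ← map_pow]
        exact (Algebra.smul_def _ _).symm
      have hzk : z ^ k ∈ M ^ k := Submodule.pow_mem_pow M hz k
      set e : ℕ := (cexp ε (r ^ (-(k : ℤ)))).toNat with he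
      have hek : e ≤ k := by
        rw [he, hcexp k]
        have h2 := hEk k
        have h3 := hE0 k
        omega
      have h2 : (π ^ e : V) • z ^ k ∈ geomSumV π ε r M := by
        have hstar : (π ^ e : V) • z ^ k ∈ starV π ε (r ^ (-(k : ℤ))) (M ^ k) :=
          Submodule.smul_mem_pointwise_smul _ _ _ hzk
        exact (le_iSup (fun n : ℕ => starV π ε (r ^ (-(n : ℤ))) (M ^ n)) k) hstar
      have h3 : (π ^ k : V) = π ^ (k - e) * π ^ e := by
        rw [← pow_add]; congr 1; omega
      have hφk : φ k = k - e := by rw [hφ]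
      rw [h1, h3, mul_smul, hφk]
      exact Submodule.smul_mem_pointwise_smul _ _ _ h2
    exact key_neumann π 𝓑 h𝓑 h𝓑c _ hbd _ φ hmono hub hw
  · -- K-algebra case
    obtain ⟨ρ₀, hρ₀mem, hlt⟩ := sInf_lt_iff.mp hρ'
    obtain ⟨r, hr0, rfl, hbd⟩ := hρ₀mem
    have hr1 : r < 1 := ENNReal.ofReal_lt_one.mp hlt
    intro z hz
    set πK : K := algebraMap V K π with hπKdef
    have hπK0 : πK ≠ 0 :=
      (map_ne_zero_iff _ (IsFractionRing.injective V K)).mpr hπ.ne_zero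
    set c : ℝ := Real.log r / Real.log ε with hc
    have hc0 : 0 < c := div_pos_iff.mpr (Or.inr ⟨Real.log_neg hr0 hr1, hεlog⟩)
    set C : ℕ → ℤ := fun k => ⌈-((k : ℝ) * c)⌉ with hC
    have hcexp : ∀ k : ℕ, cexp ε (r ^ (-(k : ℤ))) = C k := by
      intro k
      simp only [hC]
      unfold cexp
      congr 1
      rw [Real.log_zpow, hc]
      push_cast
      rw [neg_mul, neg_div, mul_div_assoc]
    have hC0 : ∀ k, C k ≤ 0 := by
      intro k
      simp only [hC]
      refine Int.ceil_le.mpr ?_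
      push_cast
      nlinarith [Nat.cast_nonneg (α := ℝ) k]
    set φ : ℕ → ℕ := fun k => (-(C k)).toNat with hφ
    have hmono : Monotone φ := by
      intro a b hab
      have h1 : C b ≤ C a := by
        simp only [hC]
        refine Int.ceil_le_ceil ?_
        have : (a : ℝ) ≤ (b : ℝ) := by exact_mod_cast hab
        nlinarith
      simp only [hφ]
      omega
    have hub : ∀ m : ℕ, ∃ k, m ≤ φ k := by
      intro m
      obtain ⟨k, hk⟩ := exists_nat_ge ((m : ℝ) / c)
      refine ⟨k, ?_⟩
      have hk' : (m : ℝ) ≤ (k : ℝ) * c := by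
        rw [div_le_iff₀ hc0] at hk; linarith
      have hCk : C k ≤ -(m : ℤ) := by
        simp only [hC]
        refine Int.ceil_le.mpr ?_
        push_cast
        linarith
      simp only [hφ]
      omega
    have hw : ∀ k : ℕ, z ^ k ∈ (π ^ φ k : V) • geomSumK K π ε r M' := by
      intro k
      have hzk : z ^ k ∈ M' ^ k := Submodule.pow_mem_pow M' hz k
      have h1 : (kSmul (V := V) K (πK ^ cexp ε (r ^ (-(k : ℤ))))) (z ^ k) ∈
          starK K π ε (r ^ (-(k : ℤ))) (M' ^ k) :=
        Submodule.mem_map_of_mem hzk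
      have h2 : (πK ^ C k) • z ^ k ∈ geomSumK K π ε r M' := by
        have h3 : (kSmul (V := V) K (πK ^ cexp ε (r ^ (-(k : ℤ))))) (z ^ k) =
            (πK ^ C k) • z ^ k := by
          rw [hcexp k]
          simp [kSmul]
        rw [← h3]
        exact (le_iSup (fun n : ℕ => starK K π ε (r ^ (-(n : ℤ))) (M' ^ n)) k) h1
      have h4 : z ^ k = (π ^ φ k : V) • ((πK ^ C k) • z ^ k) := by
        rw [← algebraMap_smul K (π ^ φ k : V) ((πK ^ C k) • z ^ k), map_pow,
          smul_smul, ← hπKdef, ← zpow_natCast πK (φ k), ← zpow_add₀ hπK0]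
        have hexp : (φ k : ℤ) + C k = 0 := by
          simp only [hφ]
          have h5 := hC0 k
          omega
        rw [hexp, zpow_zero, one_smul]
      rw [h4]
      exact Submodule.smul_mem_pointwise_smul _ _ _ h2
    exact key_neumann π 𝓒 h𝓒.1 h𝓒c _ hbd _ φ hmono hub hw
end

section
/- Let (R, 𝓑) be a bornological V-algebra and T ⊆ R a subset. The following are equivalent: (1) T has linear growth (i.e. T belongs to the linear growth bornology 𝓑^†); (2) T is contained in Σ_{i≥0} π^i S^{i+1} for some bounded S ∈ 𝓑; (3) T is contained in Σ_{i≥0} π^i S^{ci+d} for some bounded S ∈ 𝓑 and some c, d ∈ ℕ. In particular, 𝓑^† is also the smallest algebra bornology containing 𝓑 in which all V-submodules M ∈ 𝓑 (not just all M ∈ 𝓑^†) have spectral radius at most 1. -/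
open Pointwise

universe u v w

namespace Born

variable {V : Type u} [CommRing V] {A : Type v} [Ring A] [Algebra V A]

/-- `𝓑 ≤ 𝓒` for bornologies: every `𝓑`-bounded set is `𝓒`-bounded. -/
def BornLE (𝓑 𝓒 : ModBornology V A) : Prop :=
  ∀ ⦃s : Set A⦄, 𝓑.IsBounded s → 𝓒.IsBounded s

/-- `𝓛` is the linear growth bornology of the bornological `V`-algebra `(A, 𝓑)`:
the smallest algebra bornology containing `𝓑` all of whose bounded `V`-submodules have
spectral radius at most `1`. -/
noncomputable def IsLinGrowthBorn (π : V) (ε : ℝ) (𝓑 𝓛 : ModBornology V A) : Prop :=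
  IsAlgBorn 𝓛 ∧ BornLE 𝓑 𝓛 ∧
  (∀ M : Submodule V A, 𝓛.IsBounded (M : Set A) → SpecLeOne π ε 𝓛 M) ∧
  ∀ 𝓒 : ModBornology V A, IsAlgBorn 𝓒 → BornLE 𝓑 𝓒 →
    (∀ M : Submodule V A, 𝓒.IsBounded (M : Set A) → SpecLeOne π ε 𝓒 M) → BornLE 𝓛 𝓒

end Born

open Born

section Helpers

open Submodule

variable {V : Type u} [CommRing V] {R : Type v} [Ring R] [Algebra V R]

lemma mem_pointwise_smul_iff {a : V} {P : Submodule V R} {x : R} :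
    x ∈ a • P ↔ ∃ y ∈ P, a • y = x := by
  rw [← SetLike.mem_coe, Submodule.coe_pointwise_smul]
  exact Set.mem_smul_set

/-- Decreasing the power of `π` enlarges the pointwise-scaled submodule. -/
lemma pow_smul_le_pow_smul (π : V) {e i : ℕ} (h : e ≤ i) (P : Submodule V R) :
    (π ^ i) • P ≤ (π ^ e) • P := by
  intro y hy
  rw [mem_pointwise_smul_iff] at hy
  obtain ⟨x, hx, rfl⟩ := hy
  have : (π ^ i) • x = (π ^ e) • ((π ^ (i - e)) • x) := by
    rw [smul_smul, ← pow_add, Nat.add_sub_cancel' h]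
  rw [this]
  exact Submodule.smul_mem_pointwise_smul _ _ _ (Submodule.smul_of_tower_mem _ _ hx)

lemma smul_mul_smul_submodule_le (a b : V) (P Q : Submodule V R) :
    (a • P) * (b • Q) ≤ (a * b) • (P * Q) := by
  rw [Submodule.mul_le]
  intro x hx y hy
  rw [mem_pointwise_smul_iff] at hx hy
  obtain ⟨x', hx', rfl⟩ := hx
  obtain ⟨y', hy', rfl⟩ := hy
  rw [smul_mul_smul_comm]
  exact Submodule.smul_mem_pointwise_smul _ _ _ (Submodule.mul_mem_mul hx' hy')

lemma pow_mono_submodule {P Q : Submodule V R} (h : P ≤ Q) : ∀ n : ℕ, P ^ n ≤ Q ^ n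
  | 0 => le_rfl
  | n + 1 => by
      rw [pow_succ, pow_succ]
      exact mul_le_mul' (pow_mono_submodule h n) h

/-- `N ⊔ N² ⊔ ⋯ ⊔ N^q` (with the convention that `N⁰ = 1` is included). -/
noncomputable def bigN (N : Submodule V R) (q : ℕ) : Submodule V R :=
  ⨆ j ∈ Finset.range (q + 1), N ^ j

lemma pow_le_bigN {N : Submodule V R} {q j : ℕ} (h : j ≤ q) : N ^ j ≤ bigN N q := by
  refine le_trans (le_rfl) ?_
  exact le_iSup₂ (f := fun j (_ : j ∈ Finset.range (q+1)) => N ^ j) j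
    (Finset.mem_range.2 (Nat.lt_succ_of_le h))

lemma one_le_bigN (N : Submodule V R) (q : ℕ) : 1 ≤ bigN N q := by
  simpa using pow_le_bigN (N := N) (q := q) (j := 0) (Nat.zero_le q)

lemma pow_le_bigN_pow {N : Submodule V R} {q : ℕ} :
    ∀ a b : ℕ, b ≤ q * a → N ^ b ≤ bigN N q ^ a
  | 0, b, hb => by
      have : b = 0 := by omega
      subst this; simp
  | a + 1, b, hb => by
      have hj : min b q ≤ b := Nat.min_le_left _ _
      have h1 : N ^ b = N ^ (min b q) * N ^ (b - min b q) := by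
        rw [← pow_add, Nat.add_sub_cancel' hj]
      have h2 : b - min b q ≤ q * a := by
        rcases le_total b q with h | h
        · simp [Nat.min_eq_left h]
        · rw [Nat.min_eq_right h]
          rw [Nat.mul_succ] at hb; omega
      rw [h1, pow_succ']
      exact mul_le_mul' (pow_le_bigN (Nat.min_le_right _ _))
        (pow_le_bigN_pow a _ h2)

/-- The submodule `Σ_i π^i N^{i+1}`. -/
noncomputable def grow (π : V) (N : Submodule V R) : Submodule V R :=
  ⨆ i : ℕ, (π ^ i) • N ^ (i + 1)

lemma grow_mono (π : V) {N N' : Submodule V R} (h : N ≤ N') : grow π N ≤ grow π N' := by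
  refine iSup_le fun i => le_trans ?_ (le_iSup _ i)
  exact Submodule.map_mono (pow_mono_submodule h (i + 1))

lemma le_grow_self (π : V) (N : Submodule V R) : N ≤ grow π N := by
  have := le_iSup (fun i : ℕ => (π ^ i) • N ^ (i + 1)) 0
  simpa [grow] using this

/-- If `M ≤ grow π N` then `M^n ≤ Σ_k π^k N^{k+n}`. -/
lemma pow_le_of_le_grow (π : V) {M N : Submodule V R} (h : M ≤ grow π N) :
    ∀ n : ℕ, M ^ n ≤ ⨆ k : ℕ, (π ^ k) • N ^ (k + n)
  | 0 => by
      have h0 : (M : Submodule V R) ^ 0 = (π ^ 0) • N ^ (0 + 0) := by simp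
      rw [h0]
      exact le_iSup (fun k : ℕ => (π ^ k) • N ^ (k + 0)) 0
  | n + 1 => by
      have h1 : M ^ (n + 1) = M ^ n * M := pow_succ M n
      rw [h1]
      refine le_trans (mul_le_mul' (pow_le_of_le_grow π h n) h) ?_
      rw [grow, Submodule.iSup_mul]
      refine iSup_le fun k => ?_
      rw [Submodule.mul_iSup]
      refine iSup_le fun l => ?_
      refine le_trans (smul_mul_smul_submodule_le _ _ _ _) ?_
      rw [← pow_add, ← pow_add]
      have : k + n + (l + 1) = (k + l) + (n + 1) := by ring
      rw [this]
      exact le_iSup (fun m : ℕ => (π ^ m) • N ^ (m + (n + 1))) (k + l)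

end Helpers

section ClosureHelpers

variable {V : Type u} [CommRing V] {R : Type v} [Ring R] [Algebra V R]

/-- If `X` is closed under scalar multiplication, its `V`-span is contained in (hence equal
to) its additive closure. -/
lemma span_subset_addClosure {X : Set R} (hX : ∀ (v : V), ∀ x ∈ X, v • x ∈ X) :
    (Submodule.span V X : Set R) ⊆ (AddSubmonoid.closure X : Set R) := by
  let P : Submodule V R :=
    { carrier := AddSubmonoid.closure X
      add_mem' := fun h1 h2 => add_mem h1 h2
      zero_mem' := zero_mem _
      smul_mem' := by
        intro v x hx
        refine AddSubmonoid.closure_induction (fun y hy => AddSubmonoid.subset_closure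
          (hX v y hy)) (by simpa using zero_mem _) ?_ hx
        intro a b _ _ ha hb
        rw [smul_add]
        exact add_mem ha hb }
  intro x hx
  exact (Submodule.span_le (p := P)).2 (fun y hy => AddSubmonoid.subset_closure hy) hx

lemma smul_mem_closure_smul {X : Set R} (a : V) {x : R} (hx : x ∈ AddSubmonoid.closure X) :
    a • x ∈ AddSubmonoid.closure (a • X) := by
  refine AddSubmonoid.closure_induction
    (fun y hy => AddSubmonoid.subset_closure (Set.smul_mem_smul_set hy))
    (by simpa using zero_mem _) ?_ hx
  intro y z _ _ hy hz
  rw [smul_add]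
  exact add_mem hy hz

lemma smulClosed_set_pow {X : Set R} (hX : ∀ (v : V), ∀ x ∈ X, v • x ∈ X) :
    ∀ n : ℕ, ∀ (v : V), ∀ x ∈ X ^ (n + 1), v • x ∈ X ^ (n + 1)
  | 0 => by simpa using hX
  | n + 1 => by
      intro v x hx
      rw [pow_succ'] at hx ⊢
      obtain ⟨a, ha, b, hb, rfl⟩ := hx
      rw [← smul_mul_assoc]
      exact Set.mul_mem_mul (hX v a ha) hb

lemma set_smul_pow_subset (π : V) (i n : ℕ) (S : Set R) :
    (π ^ i • S ^ n : Set R) ⊆ ((π ^ i) • (Submodule.span V S) ^ n : Submodule V R) := by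
  intro x hx
  obtain ⟨y, hy, rfl⟩ := hx
  refine Submodule.smul_mem_pointwise_smul _ _ _ ?_
  rw [Submodule.span_pow]
  exact Submodule.subset_span hy

lemma closure_union_subset_iSup (π : V) (S : Set R) (c d : ℕ) :
    (AddSubmonoid.closure (⋃ i : ℕ, (π ^ i • S ^ (c * i + d) : Set R)) : Set R) ⊆
      ((⨆ i : ℕ, (π ^ i) • (Submodule.span V S) ^ (c * i + d) : Submodule V R) : Set R) := by
  set H : Submodule V R := ⨆ i : ℕ, (π ^ i) • (Submodule.span V S) ^ (c * i + d) with hH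
  have h1 : (⋃ i : ℕ, (π ^ i • S ^ (c * i + d) : Set R)) ⊆ (H : Set R) := by
    intro x hx
    obtain ⟨_, ⟨i, rfl⟩, hi⟩ := hx
    exact (le_iSup (fun i : ℕ => (π ^ i) • (Submodule.span V S) ^ (c * i + d)) i)
      (set_smul_pow_subset π i (c * i + d) S hi)
  intro x hx
  exact (AddSubmonoid.closure_le (S := H.toAddSubmonoid)).2 h1 hx

lemma grow_subset_closure (π : V) (S : Set R) :
    (grow π (Submodule.span V S) : Set R) ⊆
      (AddSubmonoid.closure (⋃ i : ℕ,
        (π ^ i • ((Submodule.span V S : Set R)) ^ (i + 1) : Set R)) : Set R) := by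
  set N := Submodule.span V S with hN
  intro x hx
  refine Submodule.iSup_induction (motive := fun x => x ∈ AddSubmonoid.closure
    (⋃ i : ℕ, (π ^ i • ((N : Set R)) ^ (i + 1) : Set R)))
    (fun i : ℕ => (π ^ i) • N ^ (i + 1)) hx ?_ (zero_mem _) (fun a b ha hb => add_mem ha hb)
  intro i y hy
  rw [mem_pointwise_smul_iff] at hy
  obtain ⟨z, hz, rfl⟩ := hy
  have hNpow : N ^ (i + 1) = Submodule.span V ((N : Set R) ^ (i + 1)) :=
    Submodule.pow_eq_span_pow_set _ _
  rw [hNpow] at hz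
  have hcl : ∀ (v : V), ∀ w ∈ (N : Set R) ^ (i + 1), v • w ∈ (N : Set R) ^ (i + 1) :=
    smulClosed_set_pow (fun v w hw => N.smul_mem v hw) i
  have h1 : z ∈ AddSubmonoid.closure ((N : Set R) ^ (i + 1)) :=
    span_subset_addClosure hcl hz
  have h2 : (π ^ i) • z ∈ AddSubmonoid.closure ((π ^ i) • ((N : Set R) ^ (i + 1)) : Set R) :=
    smul_mem_closure_smul _ h1
  exact AddSubmonoid.closure_mono (Set.subset_iUnion
    (fun i : ℕ => (π ^ i • ((N : Set R)) ^ (i + 1) : Set R)) i) h2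

end ClosureHelpers

section CexpHelpers

open Real

lemma cexp_zpow_eq {ε : ℝ} (hε0 : 0 < ε) (hε1 : ε < 1) {r : ℝ} (hr : 0 < r) (n : ℕ) :
    Born.cexp ε (r ^ (-(n : ℤ))) = ⌈(n : ℝ) * (Real.log r / (- Real.log ε))⌉ := by
  have hne : Real.log ε ≠ 0 := ne_of_lt (Real.log_neg hε0 hε1)
  unfold Born.cexp
  congr 1
  rw [Real.log_zpow]
  push_cast
  rw [div_neg, mul_neg, neg_mul, neg_div, mul_div_assoc]

lemma cexp_rpow_eq {ε : ℝ} (hε0 : 0 < ε) (hε1 : ε < 1) (q : ℕ) (hq : 0 < q) (n : ℕ) :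
    Born.cexp ε ((ε ^ (-(q : ℝ)⁻¹)) ^ (-(n : ℤ))) = ⌈(n : ℝ) / (q : ℝ)⌉ := by
  have hq' : (0 : ℝ) < q := by exact_mod_cast hq
  have hne : Real.log ε ≠ 0 := ne_of_lt (Real.log_neg hε0 hε1)
  rw [cexp_zpow_eq hε0 hε1 (Real.rpow_pos_of_pos hε0 _) n]
  congr 1
  rw [Real.log_rpow hε0]
  field_simp

end CexpHelpers

section LemmaA

open Born

variable {V : Type u} [CommRing V] {R : Type v} [Ring R] [Algebra V R]

/-- If `ρ(span S) ≤ 1` in `𝓒` then the set `Σ_i π^i S^{ci+d}` is `𝓒`-bounded. -/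
lemma closure_bounded_of_specLeOne (π : V) {ε : ℝ} (hε0 : 0 < ε) (hε1 : ε < 1)
    (𝓒 : ModBornology V R) (S : Set R) (c d : ℕ)
    (hSpow : 𝓒.IsBounded ((Submodule.span V S ^ d : Submodule V R) : Set R))
    (hspec : SpecLeOne π ε 𝓒 (Submodule.span V S)) :
    𝓒.IsBounded
      (AddSubmonoid.closure (⋃ i : ℕ, (π ^ i • S ^ (c * i + d) : Set R)) : Set R) := by
  set M := Submodule.span V S with hM
  set q : ℕ := c + d + 1 with hq
  set r : ℝ := ε ^ (-(q : ℝ)⁻¹) with hr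
  have hq0 : 0 < q := by omega
  have hr1 : 1 < r := by
    refine Real.one_lt_rpow_of_pos_of_lt_one_of_neg hε0 hε1 ?_
    have : (0 : ℝ) < (q : ℝ)⁻¹ := by positivity
    linarith
  have hgeom := hspec r hr1
  have hH : (⨆ i : ℕ, (π ^ i) • M ^ (c * i + d) : Submodule V R)
      ≤ M ^ d ⊔ geomSumV π ε r M := by
    refine iSup_le fun i => ?_
    rcases Nat.eq_zero_or_pos i with hi | hi
    · subst hi
      refine le_trans ?_ le_sup_left
      simp
    · refine le_trans ?_ (le_sup_right :
        geomSumV π ε r M ≤ M ^ d ⊔ geomSumV π ε r M)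
      have hcexp : Born.cexp ε (r ^ (-((c * i + d : ℕ) : ℤ)))
          = ⌈((c * i + d : ℕ) : ℝ) / (q : ℝ)⌉ := cexp_rpow_eq hε0 hε1 q hq0 _
      have hle : (Born.cexp ε (r ^ (-((c * i + d : ℕ) : ℤ)))).toNat ≤ i := by
        rw [hcexp, Int.toNat_le]
        refine Int.ceil_le.2 ?_
        rw [div_le_iff₀ (by positivity)]
        have hi' : (1 : ℝ) ≤ (i : ℝ) := by exact_mod_cast hi
        push_cast
        have hqR : (q : ℝ) = c + d + 1 := by rw [hq]; push_cast; ring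
        rw [hqR]
        nlinarith [hi', Nat.cast_nonneg (α := ℝ) d, Nat.cast_nonneg (α := ℝ) c]
      refine le_trans (pow_smul_le_pow_smul π hle (M ^ (c * i + d))) ?_
      exact le_iSup (fun n : ℕ => starV π ε (r ^ (-(n : ℤ))) (M ^ n)) (c * i + d)
  have hsup_bdd : 𝓒.IsBounded ((M ^ d ⊔ geomSumV π ε r M : Submodule V R) : Set R) := by
    have hspan := 𝓒.isBounded_span (𝓒.isBounded_union hSpow hgeom)
    refine 𝓒.isBounded_subset hspan ?_
    have heq : (M ^ d ⊔ geomSumV π ε r M : Submodule V R)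
        = Submodule.span V (((M ^ d : Submodule V R) : Set R) ∪ (geomSumV π ε r M : Set R)) := by
      rw [Submodule.span_union, Submodule.span_eq, Submodule.span_eq]
    rw [heq]
  refine 𝓒.isBounded_subset hsup_bdd ?_
  refine subset_trans (closure_union_subset_iSup π S c d) ?_
  exact fun x hx => hH hx

end LemmaA

section C0

open Born

variable {V : Type u} [CommRing V] {R : Type v} [Ring R] [Algebra V R]

lemma bounded_set_pow (𝓑 : ModBornology V R) (h𝓑 : IsAlgBorn 𝓑) {S : Set R}
    (hS : 𝓑.IsBounded S) : ∀ j : ℕ, 𝓑.IsBounded (S ^ j)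
  | 0 => by
      rw [pow_zero]
      exact 𝓑.isBounded_of_finite (Set.finite_one)
  | j + 1 => by
      rw [pow_succ]
      exact h𝓑 (bounded_set_pow 𝓑 h𝓑 hS j) hS

lemma bounded_biUnion_finset (𝓑 : ModBornology V R) {f : ℕ → Set R} (F : Finset ℕ)
    (h : ∀ j, 𝓑.IsBounded (f j)) : 𝓑.IsBounded (⋃ j ∈ F, f j) := by
  classical
  induction F using Finset.induction_on with
  | empty =>
      have he : (⋃ j ∈ (∅ : Finset ℕ), f j) = (∅ : Set R) := by simp
      rw [he]
      exact 𝓑.isBounded_of_finite Set.finite_empty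
  | @insert a F ha ih =>
      rw [Finset.set_biUnion_insert]
      exact 𝓑.isBounded_union (h a) ih

lemma bounded_unionPow (𝓑 : ModBornology V R) (h𝓑 : IsAlgBorn 𝓑) {S : Set R}
    (hS : 𝓑.IsBounded S) (q : ℕ) :
    𝓑.IsBounded (⋃ j ∈ Finset.range (q + 1), S ^ j) :=
  bounded_biUnion_finset 𝓑 _ (bounded_set_pow 𝓑 h𝓑 hS)

lemma span_unionPow (S : Set R) (q : ℕ) :
    Submodule.span V (⋃ j ∈ Finset.range (q + 1), S ^ j)
      = bigN (Submodule.span V S) q := by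
  rw [Submodule.span_iUnion₂]
  exact iSup_congr fun j => iSup_congr fun _ => (Submodule.span_pow S j).symm

lemma grow_mul_grow_le (π : V) (N : Submodule V R) :
    grow π N * grow π N ≤ grow π (bigN N 2) := by
  rw [grow, Submodule.iSup_mul]
  refine iSup_le fun k => ?_
  rw [Submodule.mul_iSup]
  refine iSup_le fun l => ?_
  refine le_trans (smul_mul_smul_submodule_le _ _ _ _) ?_
  rw [← pow_add, ← pow_add]
  have h1 : N ^ (k + 1 + (l + 1)) ≤ bigN N 2 ^ (k + l + 1) :=
    pow_le_bigN_pow (k + l + 1) (k + 1 + (l + 1)) (by ring_nf; omega)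
  refine le_trans (Submodule.map_mono h1) ?_
  exact le_iSup (fun i : ℕ => (π ^ i) • (bigN N 2) ^ (i + 1)) (k + l)

/-- The candidate linear growth bornology. -/
noncomputable def linGrowthBorn (π : V) (𝓑 : ModBornology V R) : ModBornology V R where
  IsBounded T := ∃ S : Set R, 𝓑.IsBounded S ∧ T ⊆ (grow π (Submodule.span V S) : Set R)
  isBounded_of_finite := by
    intro s hs
    exact ⟨s, 𝓑.isBounded_of_finite hs,
      subset_trans Submodule.subset_span (le_grow_self π _)⟩
  isBounded_subset := by
    rintro s t ⟨S, hS, hsub⟩ hst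
    exact ⟨S, hS, hst.trans hsub⟩
  isBounded_union := by
    rintro s t ⟨S1, hS1, h1⟩ ⟨S2, hS2, h2⟩
    refine ⟨S1 ∪ S2, 𝓑.isBounded_union hS1 hS2, ?_⟩
    have g1 : grow π (Submodule.span V S1) ≤ grow π (Submodule.span V (S1 ∪ S2)) :=
      grow_mono π (Submodule.span_mono Set.subset_union_left)
    have g2 : grow π (Submodule.span V S2) ≤ grow π (Submodule.span V (S1 ∪ S2)) :=
      grow_mono π (Submodule.span_mono Set.subset_union_right)
    exact Set.union_subset (h1.trans g1) (h2.trans g2)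
  isBounded_span := by
    rintro s ⟨S, hS, hsub⟩
    exact ⟨S, hS, fun x hx => (Submodule.span_le.2 hsub) hx⟩

lemma linGrowthBorn_le (π : V) (𝓑 : ModBornology V R) : BornLE 𝓑 (linGrowthBorn π 𝓑) := by
  intro s hs
  exact ⟨s, hs, subset_trans Submodule.subset_span (le_grow_self π _)⟩

lemma linGrowthBorn_isAlgBorn (π : V) (𝓑 : ModBornology V R) (h𝓑 : IsAlgBorn 𝓑) :
    IsAlgBorn (linGrowthBorn π 𝓑) := by
  rintro s t ⟨S1, hS1, h1⟩ ⟨S2, hS2, h2⟩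
  set S : Set R := S1 ∪ S2 with hSdef
  set N : Submodule V R := Submodule.span V S with hNdef
  refine ⟨⋃ j ∈ Finset.range (2 + 1), S ^ j,
    bounded_unionPow 𝓑 h𝓑 (𝓑.isBounded_union hS1 hS2) 2, ?_⟩
  rw [span_unionPow]
  intro x hx
  obtain ⟨a, ha, b, hb, rfl⟩ := hx
  have ha' : a ∈ grow π N :=
    grow_mono π (Submodule.span_mono (Set.subset_union_left)) (h1 ha)
  have hb' : b ∈ grow π N :=
    grow_mono π (Submodule.span_mono (Set.subset_union_right)) (h2 hb)
  exact grow_mul_grow_le π N (Submodule.mul_mem_mul ha' hb')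

lemma linGrowthBorn_spec (π : V) {ε : ℝ} (hε0 : 0 < ε) (hε1 : ε < 1)
    (𝓑 : ModBornology V R) (h𝓑 : IsAlgBorn 𝓑) (M : Submodule V R)
    (hM : (linGrowthBorn π 𝓑).IsBounded (M : Set R)) :
    SpecLeOne π ε (linGrowthBorn π 𝓑) M := by
  intro r hr
  obtain ⟨S, hS, hsub⟩ := hM
  set N0 : Submodule V R := Submodule.span V S with hN0
  have hMle : M ≤ grow π N0 := hsub
  set t : ℝ := Real.log r / (-Real.log ε) with htdef
  have ht0 : 0 < t := by
    refine div_pos (Real.log_pos hr) ?_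
    have := Real.log_neg hε0 hε1
    linarith
  set q : ℕ := max 1 ⌈1 / t⌉₊ with hqdef
  have hq1 : 1 ≤ q := le_max_left _ _
  have hqt : 1 ≤ (q : ℝ) * t := by
    have h1 : 1 / t ≤ (⌈1 / t⌉₊ : ℝ) := Nat.le_ceil _
    have h2 : ((⌈1 / t⌉₊ : ℕ) : ℝ) ≤ (q : ℝ) := by exact_mod_cast le_max_right 1 ⌈1 / t⌉₊
    have h3 : 1 / t ≤ (q : ℝ) := h1.trans h2
    calc (1 : ℝ) = (1 / t) * t := by field_simp
    _ ≤ (q : ℝ) * t := mul_le_mul_of_nonneg_right h3 ht0.le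
  have hen : ∀ n : ℕ, n ≤ q * (Born.cexp ε (r ^ (-(n : ℤ)))).toNat := by
    intro n
    have hc : Born.cexp ε (r ^ (-(n : ℤ))) = ⌈(n : ℝ) * t⌉ :=
      cexp_zpow_eq hε0 hε1 (lt_trans one_pos hr) n
    have h3 : (n : ℝ) * t ≤ ((Born.cexp ε (r ^ (-(n : ℤ)))).toNat : ℝ) := by
      rw [hc]
      have h4 : ((n : ℝ) * t) ≤ (⌈(n : ℝ) * t⌉ : ℝ) := Int.le_ceil _
      have h5 : ((⌈(n : ℝ) * t⌉ : ℤ) : ℝ) ≤ ((⌈(n : ℝ) * t⌉.toNat : ℕ) : ℝ) := by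
        exact_mod_cast Int.self_le_toNat _
      linarith
    have h6 : (n : ℝ) ≤ (q : ℝ) * ((Born.cexp ε (r ^ (-(n : ℤ)))).toNat : ℝ) := by
      nlinarith [h3, hqt, ht0, Nat.cast_nonneg (α := ℝ) n,
        Nat.cast_nonneg (α := ℝ) ((Born.cexp ε (r ^ (-(n : ℤ)))).toNat)]
    exact_mod_cast h6
  refine ⟨⋃ j ∈ Finset.range (q + 1), S ^ j, bounded_unionPow 𝓑 h𝓑 hS q, ?_⟩
  rw [span_unionPow]
  intro x hx
  have hx' : x ∈ ⨆ n : ℕ, starV π ε (r ^ (-(n : ℤ))) (M ^ n) := hx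
  refine Submodule.iSup_induction (motive := fun x => x ∈ grow π (bigN N0 q))
    (fun n : ℕ => starV π ε (r ^ (-(n : ℤ))) (M ^ n)) hx' ?_ (zero_mem _)
    (fun a b ha hb => add_mem ha hb)
  intro n y hy
  set e : ℕ := (Born.cexp ε (r ^ (-(n : ℤ)))).toNat with he
  have hy' : y ∈ (π ^ e) • M ^ n := hy
  rw [mem_pointwise_smul_iff] at hy'
  obtain ⟨z, hz, rfl⟩ := hy'
  have hz' : z ∈ ⨆ k : ℕ, (π ^ k) • N0 ^ (k + n) := pow_le_of_le_grow π hMle n hz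
  refine Submodule.iSup_induction (motive := fun z => (π ^ e) • z ∈ grow π (bigN N0 q))
    (fun k : ℕ => (π ^ k) • N0 ^ (k + n)) hz' ?_
    (by show (π ^ e) • (0 : R) ∈ grow π (bigN N0 q); rw [smul_zero]; exact zero_mem _)
    (fun a b ha hb => by
      show (π ^ e) • (a + b) ∈ grow π (bigN N0 q)
      rw [smul_add]
      exact add_mem ha hb)
  intro k w hw
  rw [mem_pointwise_smul_iff] at hw
  obtain ⟨u, hu, rfl⟩ := hw
  rw [smul_smul, ← pow_add]
  have hb : k + n ≤ q * (e + k + 1) := by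
    have h1 : k ≤ q * k := Nat.le_mul_of_pos_left k (by omega)
    calc k + n ≤ q * k + q * e := Nat.add_le_add h1 (hen n)
    _ ≤ q * e + q * k + q := by omega
    _ = q * (e + k + 1) := by ring
  have hmem : u ∈ bigN N0 q ^ (e + k + 1) :=
    pow_le_bigN_pow (e + k + 1) (k + n) hb hu
  exact (le_iSup (fun i : ℕ => (π ^ i) • (bigN N0 q) ^ (i + 1)) (e + k))
    (Submodule.smul_mem_pointwise_smul _ _ _ hmem)

end C0

/-- **Statement 7.** Let `(R, 𝓑)` be a bornological `V`-algebra with linear growth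
bornology `𝓛 = 𝓑^†`, and `T ⊆ R`.  TFAE: (1) `T` has linear growth; (2) `T` is contained
in `Σ_{i≥0} π^i S^{i+1}` for some bounded `S ∈ 𝓑`; (3) `T` is contained in
`Σ_{i≥0} π^i S^{ci+d}` for some bounded `S ∈ 𝓑` and `c, d ∈ ℕ`.  In particular `𝓑^†` is
also the smallest algebra bornology containing `𝓑` in which every `V`-submodule `M ∈ 𝓑`
has spectral radius at most `1`. -/
theorem linearGrowth_characterisation
    {V : Type u} [CommRing V] [IsDomain V] [IsDiscreteValuationRing V]
    (π : V) (hπ : Irreducible π) (hV : IsAdicComplete (Ideal.span {π}) V)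
    (ε : ℝ) (hε0 : 0 < ε) (hε1 : ε < 1)
    {R : Type v} [Ring R] [Algebra V R]
    (𝓑 : ModBornology V R) (h𝓑 : IsAlgBorn 𝓑)
    (𝓛 : ModBornology V R) (h𝓛 : IsLinGrowthBorn π ε 𝓑 𝓛) :
    (∀ T : Set R,
      [ 𝓛.IsBounded T,
        (∃ S : Set R, 𝓑.IsBounded S ∧
          T ⊆ (AddSubmonoid.closure (⋃ i : ℕ, (π ^ i • S ^ (i + 1) : Set R)) : Set R)),
        (∃ (S : Set R) (c d : ℕ), 𝓑.IsBounded S ∧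
          T ⊆ (AddSubmonoid.closure (⋃ i : ℕ, (π ^ i • S ^ (c * i + d) : Set R)) : Set R))
      ].TFAE)
    ∧ (∀ M : Submodule V R, 𝓑.IsBounded (M : Set R) → SpecLeOne π ε 𝓛 M)
    ∧ (∀ 𝓒 : ModBornology V R, IsAlgBorn 𝓒 → BornLE 𝓑 𝓒 →
        (∀ M : Submodule V R, 𝓑.IsBounded (M : Set R) → SpecLeOne π ε 𝓒 M) →
        BornLE 𝓛 𝓒) := by
  obtain ⟨h𝓛alg, h𝓛le, h𝓛spec, h𝓛min⟩ := h𝓛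
  have hC0spec : ∀ M : Submodule V R, (linGrowthBorn π 𝓑).IsBounded (M : Set R) →
      SpecLeOne π ε (linGrowthBorn π 𝓑) M := fun M hM =>
    linGrowthBorn_spec π hε0 hε1 𝓑 h𝓑 M hM
  have hLleC0 : BornLE 𝓛 (linGrowthBorn π 𝓑) :=
    h𝓛min _ (linGrowthBorn_isAlgBorn π 𝓑 h𝓑) (linGrowthBorn_le π 𝓑) hC0spec
  have key3 : ∀ (𝓒 : ModBornology V R), BornLE 𝓑 𝓒 →
      (∀ M : Submodule V R, 𝓑.IsBounded (M : Set R) → SpecLeOne π ε 𝓒 M) →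
      ∀ (S : Set R) (c d : ℕ), 𝓑.IsBounded S →
      𝓒.IsBounded
        (AddSubmonoid.closure (⋃ i : ℕ, (π ^ i • S ^ (c * i + d) : Set R)) : Set R) := by
    intro 𝓒 h𝓒le h𝓒spec S c d hS
    have hMb : 𝓑.IsBounded ((Submodule.span V S : Submodule V R) : Set R) :=
      𝓑.isBounded_span hS
    have hpow : 𝓑.IsBounded ((Submodule.span V S ^ d : Submodule V R) : Set R) := by
      rw [Submodule.span_pow]
      exact 𝓑.isBounded_span (bounded_set_pow 𝓑 h𝓑 hS d)
    exact closure_bounded_of_specLeOne π hε0 hε1 𝓒 S c d (h𝓒le hpow) (h𝓒spec _ hMb)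
  have h12 : ∀ T : Set R, 𝓛.IsBounded T → ∃ S : Set R, 𝓑.IsBounded S ∧
      T ⊆ (AddSubmonoid.closure (⋃ i : ℕ, (π ^ i • S ^ (i + 1) : Set R)) : Set R) := by
    intro T hT
    obtain ⟨S, hS, hsub⟩ := hLleC0 hT
    exact ⟨(Submodule.span V S : Set R), 𝓑.isBounded_span hS,
      hsub.trans (grow_subset_closure π S)⟩
  refine ⟨?_, fun M hM => h𝓛spec M (h𝓛le hM), ?_⟩
  · intro T
    tfae_have 1 → 2 := fun h => h12 T h
    tfae_have 2 → 3 := by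
      rintro ⟨S, hS, hsub⟩
      exact ⟨S, 1, 1, hS, by simpa using hsub⟩
    tfae_have 3 → 1 := by
      rintro ⟨S, c, d, hS, hsub⟩
      exact 𝓛.isBounded_subset
        (key3 𝓛 h𝓛le (fun M hM => h𝓛spec M (h𝓛le hM)) S c d hS) hsub
    tfae_finish
  · intro 𝓒 h𝓒alg h𝓒le h𝓒spec T hT
    obtain ⟨S, hS, hsub2⟩ := h12 T hT
    exact 𝓒.isBounded_subset (key3 𝓒 h𝓒le h𝓒spec S 1 1 hS) (by simpa using hsub2)
end

section
/- Let R and S be bornological V-algebras. Assume S is complete and that ρ(M) ≤ 1 for every bounded V-submodule M of S. Then every bounded unital algebra homomorphism R → S extends uniquely, through the canonical map R → R^lg, to a bounded unital homomorphism R^lg → S, where R^lg denotes the linear growth completion of R. Moreover, if ρ(M) ≤ 1 for every bounded V-submodule M of R, then the linear growth bornology of R coincides with its given bornology. -/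
open Pointwise

universe u v w

namespace Born

variable {V : Type u} [CommRing V] {X : Type v} [AddCommGroup X] [Module V X]
  {C : Type w} [AddCommGroup C] [Module V C]

/-- `(C, 𝓑C, ι)` is *the* (bornological) completion of `(X, 𝓑X)`: `C` is complete, `ι` is
bounded, and every bounded linear map from `X` to a complete bornological `V`-module
factors uniquely through `ι`. -/
def IsCompletion (π : V) (𝓑X : ModBornology V X) (𝓑C : ModBornology V C)
    (ι : X →ₗ[V] C) : Prop :=
  BornComplete π 𝓑C ∧ BoundedMap 𝓑X 𝓑C ι ∧
    ∀ (Y : Type (max u v w)) (_ : AddCommGroup Y) (_ : Module V Y) (𝓑Y : ModBornology V Y),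
      BornComplete π 𝓑Y → ∀ f : X →ₗ[V] Y, BoundedMap 𝓑X 𝓑Y f →
        ∃! g : C →ₗ[V] Y, BoundedMap 𝓑C 𝓑Y g ∧ g.comp ι = f

end Born

namespace Born

section Transfer

variable {V : Type u} [CommRing V] {X : Type v} [AddCommGroup X] [Module V X]
  {Y : Type w} [AddCommGroup Y] [Module V Y]

/-- Transfer a bornology along a linear equivalence. -/
def equivBorn (e : Y ≃ₗ[V] X) (𝓑 : ModBornology V X) : ModBornology V Y where
  IsBounded s := 𝓑.IsBounded (e '' s)
  isBounded_of_finite _ hs := 𝓑.isBounded_of_finite (hs.image e)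
  isBounded_subset _ _ ht hsub := 𝓑.isBounded_subset ht (Set.image_mono hsub)
  isBounded_union s t hs ht := by
    show 𝓑.IsBounded (e '' (s ∪ t))
    rw [Set.image_union]; exact 𝓑.isBounded_union hs ht
  isBounded_span s hs := by
    show 𝓑.IsBounded (e '' (Submodule.span V s : Set Y))
    have h1 : (e : Y →ₗ[V] X) '' ((Submodule.span V s : Submodule V Y) : Set Y)
        = (((Submodule.span V s).map (e : Y →ₗ[V] X)) : Set X) := rfl
    have h2 : (Submodule.span V s).map (e : Y →ₗ[V] X) = Submodule.span V ((e : Y →ₗ[V] X) '' s) :=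
      Submodule.map_span _ s
    have : (e : Y → X) '' ((Submodule.span V s : Submodule V Y) : Set Y)
        = ((Submodule.span V ((e : Y → X) '' s) : Submodule V X) : Set X) := by
      rw [show (e : Y → X) = ((e : Y →ₗ[V] X) : Y → X) from rfl, h1, h2]
    rw [this]
    exact 𝓑.isBounded_span hs

lemma SConvTo.mapEquiv (π : V) (e : Y ≃ₗ[V] X) {T : Set Y} {x : ℕ → Y} {l : Y}
    (h : SConvTo π T x l) : SConvTo π (e '' T) (fun n => e (x n)) (e l) := by
  obtain ⟨δ, hδ, hx⟩ := h
  refine ⟨δ, hδ, fun n => ?_⟩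
  obtain ⟨t, ht, hts⟩ := hx n
  have : e (x n) - e l = δ n • e t := by rw [← map_sub, ← hts, map_smul]
  rw [this]
  exact Set.smul_mem_smul_set ⟨t, ht, rfl⟩

lemma SCauchy.mapEquiv (π : V) (e : Y ≃ₗ[V] X) {T : Set Y} {x : ℕ → Y}
    (h : SCauchy π T x) : SCauchy π (e '' T) (fun n => e (x n)) := by
  obtain ⟨δ, hδ, hx⟩ := h
  refine ⟨δ, hδ, fun l n m hn hm => ?_⟩
  obtain ⟨t, ht, hts⟩ := hx l n m hn hm
  have : e (x n) - e (x m) = δ l • e t := by rw [← map_sub, ← hts, map_smul]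
  rw [this]
  exact Set.smul_mem_smul_set ⟨t, ht, rfl⟩

lemma BornComplete.equivBorn (π : V) (e : Y ≃ₗ[V] X) {𝓑 : ModBornology V X}
    (h : BornComplete π 𝓑) : BornComplete π (Born.equivBorn e 𝓑) := by
  constructor
  · intro x l₁ l₂ h₁ h₂
    obtain ⟨T₁, hT₁, hc₁⟩ := h₁
    obtain ⟨T₂, hT₂, hc₂⟩ := h₂
    have := h.1 (fun n => e (x n)) (e l₁) (e l₂)
      ⟨e '' T₁, hT₁, hc₁.mapEquiv π e⟩ ⟨e '' T₂, hT₂, hc₂.mapEquiv π e⟩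
    exact e.injective this
  · intro T hT
    obtain ⟨S', hS', hconv⟩ := h.2 (e '' T) hT
    refine ⟨e.symm '' S', ?_, ?_⟩
    · show 𝓑.IsBounded (e '' (e.symm '' S'))
      have : e '' (e.symm '' S') = S' := by
        rw [Set.image_image]; simp
      rw [this]; exact hS'
    · intro x hx
      obtain ⟨l, hl⟩ := hconv (fun n => e (x n)) (hx.mapEquiv π e)
      refine ⟨e.symm l, ?_⟩
      have := hl.mapEquiv π e.symm
      simpa using this

end Transfer

section Pull

variable {V : Type u} [CommRing V] {R : Type v} [Ring R] [Algebra V R]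
  {S : Type w} [Ring S] [Algebra V S]

/-- Pullback of a bornology along an algebra hom. -/
def pullBorn (f : R →ₐ[V] S) (𝓑S : ModBornology V S) : ModBornology V R where
  IsBounded s := 𝓑S.IsBounded (f '' s)
  isBounded_of_finite _ hs := 𝓑S.isBounded_of_finite (hs.image f)
  isBounded_subset _ _ ht hsub := 𝓑S.isBounded_subset ht (Set.image_mono hsub)
  isBounded_union s t hs ht := by
    show 𝓑S.IsBounded (f '' (s ∪ t))
    rw [Set.image_union]; exact 𝓑S.isBounded_union hs ht
  isBounded_span s hs := by
    show 𝓑S.IsBounded (f '' (Submodule.span V s : Set R))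
    have h2 : (Submodule.span V s).map f.toLinearMap = Submodule.span V (f '' s) :=
      Submodule.map_span _ s
    have : (f : R → S) '' ((Submodule.span V s : Submodule V R) : Set R)
        = ((Submodule.span V ((f : R → S) '' s) : Submodule V S) : Set S) := by
      rw [← h2]; rfl
    rw [this]
    exact 𝓑S.isBounded_span hs

lemma pullBorn_isAlgBorn (f : R →ₐ[V] S) {𝓑S : ModBornology V S} (h : IsAlgBorn 𝓑S) :
    IsAlgBorn (pullBorn f 𝓑S) := by
  intro s t hs ht
  show 𝓑S.IsBounded (f '' (s * t))
  rw [Set.image_mul]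
  exact h hs ht

lemma pullBorn_spec (π : V) (ε : ℝ) (f : R →ₐ[V] S) {𝓑S : ModBornology V S}
    (hSρ : ∀ M : Submodule V S, 𝓑S.IsBounded (M : Set S) → SpecLeOne π ε 𝓑S M) :
    ∀ M : Submodule V R, (pullBorn f 𝓑S).IsBounded (M : Set R) →
      SpecLeOne π ε (pullBorn f 𝓑S) M := by
  intro M hM r hr
  show 𝓑S.IsBounded (f '' (geomSumV π ε r M : Set R))
  have hmap : (geomSumV π ε r M).map f.toLinearMap
      = geomSumV π ε r (M.map f.toLinearMap) := by
    rw [geomSumV, Submodule.map_iSup]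
    refine iSup_congr fun n => ?_
    rw [starV, starV, Submodule.map_pointwise_smul, Submodule.map_pow]
  have himg : f '' (geomSumV π ε r M : Set R)
      = ((geomSumV π ε r M).map f.toLinearMap : Set S) := rfl
  rw [himg, hmap]
  exact hSρ (M.map f.toLinearMap) hM r hr

end Pull

end Born

open Born

/-- **Statement 8.** Let `R` and `S` be bornological `V`-algebras, with `S` complete and
`ρ(M) ≤ 1` for every bounded `V`-submodule `M` of `S`.  Then every bounded unital algebra
homomorphism `R → S` extends uniquely through the canonical map `R → R^lg` to a bounded
unital homomorphism `R^lg → S`, where `R^lg` is the linear growth completion of `R`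
(that is, the completion of `R` with respect to its linear growth bornology `𝓛`).
Moreover, if `ρ(M) ≤ 1` for every bounded `V`-submodule `M` of `R`, then the linear
growth bornology of `R` coincides with its given bornology. -/
theorem linearGrowthCompletion_universal_property
    {V : Type u} [CommRing V] [IsDomain V] [IsDiscreteValuationRing V]
    (π : V) (hπ : Irreducible π) (hV : IsAdicComplete (Ideal.span {π}) V)
    (ε : ℝ) (hε0 : 0 < ε) (hε1 : ε < 1)
    -- the bornological `V`-algebra `R` with its linear growth bornology `𝓛`
    {R : Type v} [Ring R] [Algebra V R]
    (𝓑 : ModBornology V R) (h𝓑 : IsAlgBorn 𝓑)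
    (𝓛 : ModBornology V R) (h𝓛 : IsLinGrowthBorn π ε 𝓑 𝓛)
    -- the linear growth completion `C = R^lg`
    {C : Type w} [Ring C] [Algebra V C]
    (𝓑C : ModBornology V C) (h𝓑C : IsAlgBorn 𝓑C) (ι : R →ₐ[V] C)
    (hC : IsCompletion π 𝓛 𝓑C ι.toLinearMap)
    -- the complete bornological `V`-algebra `S` with all spectral radii at most one
    {S : Type w} [Ring S] [Algebra V S]
    (𝓑S : ModBornology V S) (h𝓑S : IsAlgBorn 𝓑S) (hScompl : BornComplete π 𝓑S)
    (hSρ : ∀ M : Submodule V S, 𝓑S.IsBounded (M : Set S) → SpecLeOne π ε 𝓑S M) :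
    (∀ f : R →ₐ[V] S, BoundedMap 𝓑 𝓑S f.toLinearMap →
      ∃! g : C →ₐ[V] S, BoundedMap 𝓑C 𝓑S g.toLinearMap ∧ g.comp ι = f)
    ∧ ((∀ M : Submodule V R, 𝓑.IsBounded (M : Set R) → SpecLeOne π ε 𝓑 M) →
        ∀ s : Set R, 𝓛.IsBounded s ↔ 𝓑.IsBounded s) := by
  constructor
  · -- universal property
    intro f hf
    -- `f` is bounded for the linear growth bornology
    have hf𝓛 : BoundedMap 𝓛 𝓑S f.toLinearMap :=
      h𝓛.2.2.2 (pullBorn f 𝓑S) (pullBorn_isAlgBorn f h𝓑S)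
        (fun s hs => hf hs) (pullBorn_spec π ε f hSρ)
    -- transfer `S` up a universe
    let e : ULift.{max u v} S ≃ₗ[V] S := ULift.moduleEquiv
    let 𝓑S' : ModBornology V (ULift.{max u v} S) := equivBorn e 𝓑S
    have hS'compl : BornComplete π 𝓑S' := hScompl.equivBorn π e
    have hup : ∀ (h : C →ₗ[V] S), BoundedMap 𝓑C 𝓑S h →
        BoundedMap 𝓑C 𝓑S' (e.symm.toLinearMap ∘ₗ h) := by
      intro h hb s hs
      show 𝓑S.IsBounded (e '' ((e.symm.toLinearMap ∘ₗ h) '' s))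
      have : e '' ((e.symm.toLinearMap ∘ₗ h) '' s) = h '' s := by
        rw [show ((e.symm.toLinearMap ∘ₗ h : C →ₗ[V] ULift.{max u v} S) : C → ULift.{max u v} S)
            = fun c => e.symm (h c) from rfl, Set.image_image]
        simp
      rw [this]; exact hb hs
    -- the key uniqueness principle for bounded maps out of `C`
    have unique_ext : ∀ h₁ h₂ : C →ₗ[V] S, BoundedMap 𝓑C 𝓑S h₁ → BoundedMap 𝓑C 𝓑S h₂ →
        h₁ ∘ₗ ι.toLinearMap = h₂ ∘ₗ ι.toLinearMap → h₁ = h₂ := by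
      intro h₁ h₂ hb₁ hb₂ hcomp
      have hFb : BoundedMap 𝓛 𝓑S' (e.symm.toLinearMap ∘ₗ (h₁ ∘ₗ ι.toLinearMap)) := by
        intro s hs
        have : (h₁ ∘ₗ ι.toLinearMap) '' s = h₁ '' (ι '' s) := by
          rw [show ((h₁ ∘ₗ ι.toLinearMap : R →ₗ[V] S) : R → S) = fun r => h₁ (ι r) from rfl,
            ← Set.image_image]
        have hb : BoundedMap 𝓑C 𝓑S' (e.symm.toLinearMap ∘ₗ h₁) := hup h₁ hb₁
        have := hb (hC.2.1 hs)
        show 𝓑S'.IsBounded ((e.symm.toLinearMap ∘ₗ (h₁ ∘ₗ ι.toLinearMap)) '' s)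
        have heq : (e.symm.toLinearMap ∘ₗ (h₁ ∘ₗ ι.toLinearMap)) '' s
            = (e.symm.toLinearMap ∘ₗ h₁) '' (ι '' s) := by
          rw [show ((e.symm.toLinearMap ∘ₗ (h₁ ∘ₗ ι.toLinearMap) :
              R →ₗ[V] ULift.{max u v} S) : R → ULift.{max u v} S)
              = fun r => (e.symm.toLinearMap ∘ₗ h₁) (ι r) from rfl, ← Set.image_image]
        rw [heq]; exact this
      obtain ⟨G, _, hGu⟩ := hC.2.2 (ULift.{max u v} S) inferInstance inferInstance 𝓑S'
        hS'compl (e.symm.toLinearMap ∘ₗ (h₁ ∘ₗ ι.toLinearMap)) hFb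
      have e₁ : e.symm.toLinearMap ∘ₗ h₁ = G :=
        hGu _ ⟨hup h₁ hb₁, by rw [LinearMap.comp_assoc]⟩
      have e₂ : e.symm.toLinearMap ∘ₗ h₂ = G :=
        hGu _ ⟨hup h₂ hb₂, by rw [LinearMap.comp_assoc, ← hcomp]⟩
      have : e.symm.toLinearMap ∘ₗ h₁ = e.symm.toLinearMap ∘ₗ h₂ := e₁.trans e₂.symm
      ext c
      have := congrArg (fun (F : C →ₗ[V] ULift.{max u v} S) => e (F c)) this
      simpa using this
    -- construct the extension as a linear map
    have hfb' : BoundedMap 𝓛 𝓑S' (e.symm.toLinearMap ∘ₗ f.toLinearMap) := by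
      intro s hs
      show 𝓑S.IsBounded (e '' ((e.symm.toLinearMap ∘ₗ f.toLinearMap) '' s))
      have : e '' ((e.symm.toLinearMap ∘ₗ f.toLinearMap) '' s) = f '' s := by
        rw [show ((e.symm.toLinearMap ∘ₗ f.toLinearMap : R →ₗ[V] ULift.{max u v} S) :
            R → ULift.{max u v} S) = fun r => e.symm (f r) from rfl, Set.image_image]
        simp
      rw [this]; exact hf𝓛 hs
    obtain ⟨g₀, ⟨hg₀b, hg₀ι⟩, _⟩ := hC.2.2 (ULift.{max u v} S) inferInstance inferInstance 𝓑S'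
      hS'compl (e.symm.toLinearMap ∘ₗ f.toLinearMap) hfb'
    set g : C →ₗ[V] S := e.toLinearMap ∘ₗ g₀ with hg
    have gb : BoundedMap 𝓑C 𝓑S g := by
      intro s hs
      have := hg₀b hs
      show 𝓑S.IsBounded (g '' s)
      have heq : g '' s = e '' (g₀ '' s) := by
        rw [hg, show ((e.toLinearMap ∘ₗ g₀ : C →ₗ[V] S) : C → S) = fun c => e (g₀ c) from rfl,
          ← Set.image_image]
      rw [heq]; exact this
    have gι : ∀ r : R, g (ι r) = f r := by
      intro r
      have := congrArg (fun (F : R →ₗ[V] ULift.{max u v} S) => e (F r)) hg₀ι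
      simpa [hg] using this
    -- multiplicativity, step 1
    have step1 : ∀ (r : R) (c : C), g (ι r * c) = f r * g c := by
      intro r c
      have hb₁ : BoundedMap 𝓑C 𝓑S (g ∘ₗ LinearMap.mulLeft V (ι r)) := by
        intro s hs
        have h1 : 𝓑C.IsBounded ({ι r} * s) :=
          h𝓑C (𝓑C.isBounded_of_finite (Set.finite_singleton _)) hs
        have h2 : (LinearMap.mulLeft V (ι r)) '' s = {ι r} * s := by
          rw [Set.singleton_mul]; rfl
        have h3 : 𝓑C.IsBounded ((LinearMap.mulLeft V (ι r)) '' s) := by rw [h2]; exact h1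
        have heq : (g ∘ₗ LinearMap.mulLeft V (ι r)) '' s
            = g '' ((LinearMap.mulLeft V (ι r)) '' s) := by
          rw [show ((g ∘ₗ LinearMap.mulLeft V (ι r) : C →ₗ[V] S) : C → S)
              = fun c => g (LinearMap.mulLeft V (ι r) c) from rfl, ← Set.image_image]
        rw [heq]; exact gb h3
      have hb₂ : BoundedMap 𝓑C 𝓑S (LinearMap.mulLeft V (f r) ∘ₗ g) := by
        intro s hs
        have h1 : 𝓑S.IsBounded ({f r} * (g '' s)) :=
          h𝓑S (𝓑S.isBounded_of_finite (Set.finite_singleton _)) (gb hs)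
        have heq : (LinearMap.mulLeft V (f r) ∘ₗ g) '' s = {f r} * (g '' s) := by
          ext y
          simp [Set.singleton_mul, Set.image_image]
        rw [heq]; exact h1
      have hcomp : (g ∘ₗ LinearMap.mulLeft V (ι r)) ∘ₗ ι.toLinearMap
          = (LinearMap.mulLeft V (f r) ∘ₗ g) ∘ₗ ι.toLinearMap := by
        ext r'
        show g (ι r * ι r') = f r * g (ι r')
        rw [← map_mul, gι, gι, map_mul]
      have := unique_ext _ _ hb₁ hb₂ hcomp
      exact congrArg (fun (F : C →ₗ[V] S) => F c) this
    -- multiplicativity, step 2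
    have step2 : ∀ c c' : C, g (c' * c) = g c' * g c := by
      intro c c'
      have hb₁ : BoundedMap 𝓑C 𝓑S (g ∘ₗ LinearMap.mulRight V c) := by
        intro s hs
        have h1 : 𝓑C.IsBounded (s * {c}) :=
          h𝓑C hs (𝓑C.isBounded_of_finite (Set.finite_singleton _))
        have h2 : (LinearMap.mulRight V c) '' s = s * {c} := by
          rw [Set.mul_singleton]; rfl
        have h3 : 𝓑C.IsBounded ((LinearMap.mulRight V c) '' s) := by rw [h2]; exact h1
        have heq : (g ∘ₗ LinearMap.mulRight V c) '' s
            = g '' ((LinearMap.mulRight V c) '' s) := by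
          rw [show ((g ∘ₗ LinearMap.mulRight V c : C →ₗ[V] S) : C → S)
              = fun x => g (LinearMap.mulRight V c x) from rfl, ← Set.image_image]
        rw [heq]; exact gb h3
      have hb₂ : BoundedMap 𝓑C 𝓑S (LinearMap.mulRight V (g c) ∘ₗ g) := by
        intro s hs
        have h1 : 𝓑S.IsBounded ((g '' s) * {g c}) :=
          h𝓑S (gb hs) (𝓑S.isBounded_of_finite (Set.finite_singleton _))
        have heq : (LinearMap.mulRight V (g c) ∘ₗ g) '' s = (g '' s) * {g c} := by
          ext y
          simp [Set.mul_singleton, Set.image_image]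
        rw [heq]; exact h1
      have hcomp : (g ∘ₗ LinearMap.mulRight V c) ∘ₗ ι.toLinearMap
          = (LinearMap.mulRight V (g c) ∘ₗ g) ∘ₗ ι.toLinearMap := by
        ext r
        show g (ι r * c) = g (ι r) * g c
        rw [step1, gι]
      have := unique_ext _ _ hb₁ hb₂ hcomp
      exact congrArg (fun (F : C →ₗ[V] S) => F c') this
    have g1 : g 1 = 1 := by
      simpa using gι 1
    -- assemble the algebra homomorphism
    refine ⟨AlgHom.ofLinearMap g g1 (fun x y => step2 y x), ⟨gb, ?_⟩, ?_⟩
    · ext r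
      exact gι r
    · rintro g' ⟨hg'b, hg'ι⟩
      have : g'.toLinearMap = g := by
        refine unique_ext _ _ hg'b gb ?_
        ext r
        show g' (ι r) = g (ι r)
        rw [gι]
        exact congrArg (fun (F : R →ₐ[V] S) => F r) hg'ι
      ext c
      exact congrArg (fun (F : C →ₗ[V] S) => F c) this
  · -- the linear growth bornology coincides with the given one
    intro hyp s
    exact ⟨fun h => h𝓛.2.2.2 𝓑 h𝓑 (fun _ h => h) hyp h, fun h => h𝓛.2.1 h⟩
end
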